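/- arXiv:2311.14723 — 4 statements merged into one kernel-verified Lean document; each statement's English description precedes it below -/
import Mathlib

section
/- Let n ≥ 1, d ≥ 2, and let V : Fin n → MvPolynomial (Fin n) ℂ be a polynomial map of degree ≤ d with V(0) = 0 and V'(0) = 0. Let ‖V‖ denote the maximum of the absolute values of all coefficients of the polynomials V i. Then there exists a function F : ℂ^n → ℂ^n, analytic on the open ball B = { y : ‖y‖_∞ < 1 / ((2n)^d · (1 + ‖V‖)) } (sup norm on ℂ^n), with F(0) = 0 and F(y) = y + V(F(y)) for every y ∈ B; in particular F(y) - V(F(y)) = y, so F is a local analytic inverse of x ↦ x - V(x). -/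
open MvPolynomial

/-- The maximum (supremum) of the absolute values of all coefficients of the
components of a polynomial map `V : ℂ^n → ℂ^n`. -/
noncomputable def coeffNorm {n : ℕ} (V : Fin n → MvPolynomial (Fin n) ℂ) : ℝ :=
  sSup {r : ℝ | ∃ (i : Fin n) (m : Fin n →₀ ℕ), r = ‖MvPolynomial.coeff m (V i)‖}

namespace ALIAux

open Finset

/-- The total degree of a monomial. -/
def mdeg {n : ℕ} (m : Fin n →₀ ℕ) : ℕ := m.sum fun _ e => e

lemma mdeg_eq_sum {n : ℕ} (m : Fin n →₀ ℕ) : mdeg m = ∑ j, m j :=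
  Finsupp.sum_fintype _ _ fun _ => rfl

lemma multichoose_le_pow : ∀ a k : ℕ, Nat.multichoose a k ≤ a ^ k
  | _, 0 => by simp
  | 0, (k+1) => by simp
  | (a+1), (k+1) => by
    rw [Nat.multichoose_succ_succ]
    have h1 := multichoose_le_pow a (k+1)
    have h2 := multichoose_le_pow (a+1) k
    have h3 : a ^ k ≤ (a+1) ^ k := Nat.pow_le_pow_left (Nat.le_succ a) k
    calc Nat.multichoose a (k+1) + Nat.multichoose (a+1) k
        ≤ a ^ (k+1) + (a+1) ^ k := Nat.add_le_add h1 h2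
      _ = a ^ k * a + (a+1) ^ k := by rw [pow_succ]
      _ ≤ (a+1) ^ k * a + (a+1) ^ k := by
          exact Nat.add_le_add_right (Nat.mul_le_mul_right a h3) _
      _ ≤ (a+1) ^ k * a + (a+1) ^ k * 1 := by simp
      _ = (a+1) ^ (k+1) := by rw [pow_succ]; ring

lemma card_mdeg_filter_le {n : ℕ} (hn : 1 ≤ n) (S : Finset (Fin n →₀ ℕ)) (k : ℕ) :
    (S.filter fun m => mdeg m = k).card ≤ n ^ k := by
  classical
  have hinj : Function.Injective
      (fun m : {m // m ∈ S.filter fun m => mdeg m = k} =>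
        (⟨Finsupp.toMultiset m.1, by
          rw [Finsupp.card_toMultiset]
          exact (Finset.mem_filter.1 m.2).2⟩ : Sym (Fin n) k)) := by
    intro m1 m2 he
    have hval : Finsupp.toMultiset m1.1 = Finsupp.toMultiset m2.1 := congrArg Subtype.val he
    have h2 := congrArg Multiset.toFinsupp hval
    rw [Finsupp.toMultiset_toFinsupp, Finsupp.toMultiset_toFinsupp] at h2
    exact Subtype.ext h2
  calc (S.filter fun m => mdeg m = k).card
      = Fintype.card {m // m ∈ S.filter fun m => mdeg m = k} := (Fintype.card_coe _).symm
    _ ≤ Fintype.card (Sym (Fin n) k) := Fintype.card_le_of_injective _ hinj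
    _ = Nat.multichoose (Fintype.card (Fin n)) k := Sym.card_sym_eq_multichoose _ _
    _ = Nat.multichoose n k := by rw [Fintype.card_fin]
    _ ≤ n ^ k := multichoose_le_pow n k

lemma two_le_mdeg {n : ℕ} {p : MvPolynomial (Fin n) ℂ}
    (h0 : MvPolynomial.coeff 0 p = 0) (h1 : ∀ j, MvPolynomial.coeff (Finsupp.single j 1) p = 0)
    {m : Fin n →₀ ℕ} (hm : m ∈ p.support) : 2 ≤ mdeg m := by
  classical
  have hcard : Multiset.card (Finsupp.toMultiset m) = mdeg m := Finsupp.card_toMultiset m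
  by_contra h
  push_neg at h
  have hcases : mdeg m = 0 ∨ mdeg m = 1 := by omega
  rcases hcases with hh | hh
  · -- degree 0 : m = 0
    have : Finsupp.toMultiset m = 0 := by
      rw [← Multiset.card_eq_zero, hcard, hh]
    have hm0 : m = 0 := by
      have := congrArg Multiset.toFinsupp this
      rwa [Finsupp.toMultiset_toFinsupp, Multiset.toFinsupp_zero] at this
    rw [hm0] at hm
    exact (MvPolynomial.mem_support_iff.1 hm) h0
  · -- degree 1 : m = single j 1
    have : Multiset.card (Finsupp.toMultiset m) = 1 := by rw [hcard, hh]
    obtain ⟨a, ha⟩ := Multiset.card_eq_one.1 this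
    have hm1 : m = Finsupp.single a 1 := by
      have := congrArg Multiset.toFinsupp ha
      rwa [Finsupp.toMultiset_toFinsupp, Multiset.toFinsupp_singleton] at this
    rw [hm1] at hm
    exact (MvPolynomial.mem_support_iff.1 hm) (h1 a)

lemma sum_support_weight {n d : ℕ} (hn : 1 ≤ n) {p : MvPolynomial (Fin n) ℂ}
    (hdeg : p.totalDegree ≤ d)
    (h0 : MvPolynomial.coeff 0 p = 0) (h1 : ∀ j, MvPolynomial.coeff (Finsupp.single j 1) p = 0)
    (w : ℕ → ℝ) (hw : ∀ k, 0 ≤ w k) :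
    ∑ m ∈ p.support, w (mdeg m) ≤ ∑ k ∈ Finset.Icc 2 d, (n : ℝ) ^ k * w k := by
  classical
  have maps : ∀ m ∈ p.support, mdeg m ∈ Finset.Icc 2 d := fun m hm =>
    Finset.mem_Icc.2 ⟨two_le_mdeg h0 h1 hm, le_trans (MvPolynomial.le_totalDegree hm) hdeg⟩
  rw [← Finset.sum_fiberwise_of_maps_to maps (fun m => w (mdeg m))]
  apply Finset.sum_le_sum
  intro k _
  have heq : ∑ m ∈ p.support.filter (fun m => mdeg m = k), w (mdeg m)
      = ∑ m ∈ p.support.filter (fun m => mdeg m = k), w k := by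
    apply Finset.sum_congr rfl
    intro m hm
    rw [(Finset.mem_filter.1 hm).2]
  rw [heq, Finset.sum_const, nsmul_eq_mul]
  apply mul_le_mul_of_nonneg_right _ (hw k)
  calc ((p.support.filter fun m => mdeg m = k).card : ℝ)
      ≤ ((n ^ k : ℕ) : ℝ) := by exact_mod_cast card_mdeg_filter_le hn _ k
    _ = (n : ℝ) ^ k := by push_cast; ring

lemma abs_pow_sub_pow {t : ℝ} (a b : ℂ) (k : ℕ)
    (ha : ‖a‖ ≤ t) (hb : ‖b‖ ≤ t) :
    ‖a ^ k - b ^ k‖ ≤ k * t ^ (k - 1) * ‖a - b‖ := by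
  have ht : 0 ≤ t := le_trans (norm_nonneg a) ha
  induction k with
  | zero => simp
  | succ k ih =>
    have key : a ^ (k+1) - b ^ (k+1) = a * (a ^ k - b ^ k) + (a - b) * b ^ k := by ring
    rw [key]
    have habsb : ‖b‖ ^ k ≤ t ^ k := pow_le_pow_left₀ (norm_nonneg b) hb k
    calc ‖a * (a ^ k - b ^ k) + (a - b) * b ^ k‖
        ≤ ‖a * (a ^ k - b ^ k)‖ + ‖(a - b) * b ^ k‖ :=
          norm_add_le _ _
      _ = ‖a‖ * ‖a ^ k - b ^ k‖
            + ‖a - b‖ * ‖b‖ ^ k := by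
          rw [norm_mul, norm_mul, norm_pow]
      _ ≤ t * (k * t ^ (k - 1) * ‖a - b‖) + ‖a - b‖ * t ^ k := by
          apply add_le_add
          · exact mul_le_mul ha ih (norm_nonneg _)
              (le_trans (norm_nonneg _) ha)
          · exact mul_le_mul_of_nonneg_left habsb (norm_nonneg _)
      _ ≤ (k + 1 : ℕ) * t ^ ((k+1) - 1) * ‖a - b‖ := by
          cases k with
          | zero => simp
          | succ j =>
            have e1 : (j + 1 + 1 : ℕ) - 1 = j + 1 := rfl
            have e2 : (j + 1 : ℕ) - 1 = j := rfl
            rw [e1, e2]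
            have : t * ((j+1 : ℕ) * t ^ j * ‖a - b‖)
                + ‖a - b‖ * t ^ (j+1)
                = ((j+1+1 : ℕ)) * t ^ (j+1) * ‖a - b‖ := by
              push_cast
              ring
            exact le_of_eq this

lemma abs_prod_sub_prod {ι : Type*} [DecidableEq ι] (s : Finset ι) (f g : ι → ℂ) (A B : ι → ℝ)
    (hA : ∀ j, ‖f j‖ ≤ A j) (hA' : ∀ j, ‖g j‖ ≤ A j)
    (hB : ∀ j, ‖f j - g j‖ ≤ B j) (hBnn : ∀ j, 0 ≤ B j) :
    ‖∏ j ∈ s, f j - ∏ j ∈ s, g j‖ ≤ ∑ j ∈ s, B j * ∏ l ∈ s.erase j, A l := by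
  classical
  have hAnn : ∀ j, 0 ≤ A j := fun j => le_trans (norm_nonneg _) (hA j)
  induction s using Finset.induction_on with
  | empty => simp
  | @insert a s ha ih =>
    rw [Finset.prod_insert ha, Finset.prod_insert ha, Finset.sum_insert ha]
    have key : f a * ∏ j ∈ s, f j - g a * ∏ j ∈ s, g j
        = f a * (∏ j ∈ s, f j - ∏ j ∈ s, g j) + (f a - g a) * ∏ j ∈ s, g j := by ring
    rw [key]
    have habsg : ‖∏ j ∈ s, g j‖ ≤ ∏ l ∈ s, A l := by
      rw [norm_prod]
      exact Finset.prod_le_prod (fun j _ => norm_nonneg _) (fun j _ => hA' j)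
    have herase : (insert a s).erase a = s := Finset.erase_insert ha
    calc ‖f a * (∏ j ∈ s, f j - ∏ j ∈ s, g j) + (f a - g a) * ∏ j ∈ s, g j‖
        ≤ ‖f a‖ * ‖∏ j ∈ s, f j - ∏ j ∈ s, g j‖
          + ‖f a - g a‖ * ‖∏ j ∈ s, g j‖ := by
          refine le_trans (norm_add_le _ _) ?_
          rw [norm_mul, norm_mul]
      _ ≤ A a * (∑ j ∈ s, B j * ∏ l ∈ s.erase j, A l) + B a * ∏ l ∈ s, A l := by
          apply add_le_add
          · exact mul_le_mul (hA a) ih (norm_nonneg _) (hAnn a)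
          · exact mul_le_mul (hB a) habsg (norm_nonneg _) (hBnn a)
      _ = B a * ∏ l ∈ (insert a s).erase a, A l
          + ∑ j ∈ s, B j * ∏ l ∈ (insert a s).erase j, A l := by
          rw [herase, add_comm, Finset.mul_sum]
          congr 1
          apply Finset.sum_congr rfl
          intro j hj
          have hja : j ≠ a := fun h => ha (h ▸ hj)
          rw [Finset.erase_insert_of_ne (Ne.symm hja),
            Finset.prod_insert (fun hmem => ha (Finset.mem_of_mem_erase hmem))]
          ring

lemma abs_monomial_sub {n : ℕ} (m : Fin n →₀ ℕ) (x x' : Fin n → ℂ) {t δ : ℝ}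
    (ht : 0 ≤ t) (hδ : 0 ≤ δ)
    (hx : ∀ j, ‖x j‖ ≤ t) (hx' : ∀ j, ‖x' j‖ ≤ t)
    (hdiff : ∀ j, ‖x j - x' j‖ ≤ δ) :
    ‖∏ j, x j ^ m j - ∏ j, x' j ^ m j‖
      ≤ (mdeg m : ℝ) * t ^ (mdeg m - 1) * δ := by
  classical
  have step1 := abs_prod_sub_prod (Finset.univ) (fun j => x j ^ m j) (fun j => x' j ^ m j)
    (fun j => t ^ m j) (fun j => (m j : ℝ) * t ^ (m j - 1) * δ)
    (fun j => by rw [norm_pow]; exact pow_le_pow_left₀ (norm_nonneg _) (hx j) _)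
    (fun j => by rw [norm_pow]; exact pow_le_pow_left₀ (norm_nonneg _) (hx' j) _)
    (fun j => by
      refine le_trans (abs_pow_sub_pow (x j) (x' j) (m j) (hx j) (hx' j)) ?_
      exact mul_le_mul_of_nonneg_left (hdiff j)
        (by positivity))
    (fun j => by positivity)
  refine le_trans step1 ?_
  have hterm : ∀ j : Fin n,
      ((m j : ℝ) * t ^ (m j - 1) * δ) * ∏ l ∈ Finset.univ.erase j, t ^ m l
        ≤ (m j : ℝ) * t ^ (mdeg m - 1) * δ := by
    intro j
    rcases Nat.eq_zero_or_pos (m j) with h0 | hpos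
    · rw [h0]; simp
    · have hprod : ∏ l ∈ Finset.univ.erase j, t ^ m l
          = t ^ (∑ l ∈ Finset.univ.erase j, m l) := by
        rw [Finset.prod_pow_eq_pow_sum]
      have hsum : m j + ∑ l ∈ Finset.univ.erase j, m l = mdeg m := by
        rw [mdeg_eq_sum]
        exact Finset.add_sum_erase Finset.univ (fun l => m l) (Finset.mem_univ j)
      have hexp : (m j - 1) + (∑ l ∈ Finset.univ.erase j, m l) = mdeg m - 1 := by omega
      rw [hprod, ← hexp, pow_add]
      exact le_of_eq (by ring)
  refine le_trans (Finset.sum_le_sum (fun j _ => hterm j)) ?_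
  have : ∑ j : Fin n, (m j : ℝ) * t ^ (mdeg m - 1) * δ
      = (∑ j : Fin n, (m j : ℝ)) * (t ^ (mdeg m - 1) * δ) := by
    rw [Finset.sum_mul]; apply Finset.sum_congr rfl; intros; ring
  rw [this]
  have hcast : (∑ j : Fin n, (m j : ℝ)) = (mdeg m : ℝ) := by
    rw [mdeg_eq_sum]; push_cast; rfl
  rw [hcast, mul_assoc]

lemma abs_eval_le {n d : ℕ} (hn : 1 ≤ n) {p : MvPolynomial (Fin n) ℂ} {N : ℝ}
    (hc : ∀ m, ‖MvPolynomial.coeff m p‖ ≤ N)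
    (hdeg : p.totalDegree ≤ d)
    (h0 : MvPolynomial.coeff 0 p = 0) (h1 : ∀ j, MvPolynomial.coeff (Finsupp.single j 1) p = 0)
    (x : Fin n → ℂ) {t : ℝ} (ht : 0 ≤ t) (hx : ∀ j, ‖x j‖ ≤ t) :
    ‖MvPolynomial.eval x p‖ ≤ N * ∑ k ∈ Finset.Icc 2 d, (n : ℝ) ^ k * t ^ k := by
  classical
  have hN : 0 ≤ N := le_trans (norm_nonneg _) (hc 0)
  rw [MvPolynomial.eval_eq']
  calc ‖∑ m ∈ p.support, MvPolynomial.coeff m p * ∏ j, x j ^ m j‖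
      ≤ ∑ m ∈ p.support, ‖MvPolynomial.coeff m p * ∏ j, x j ^ m j‖ :=
        norm_sum_le _ _
    _ ≤ ∑ m ∈ p.support, N * t ^ (mdeg m) := by
        apply Finset.sum_le_sum
        intro m _
        rw [norm_mul]
        have habs : ‖∏ j, x j ^ m j‖ ≤ t ^ (mdeg m) := by
          rw [norm_prod]
          calc ∏ j, ‖x j ^ m j‖ ≤ ∏ j, t ^ m j := by
                apply Finset.prod_le_prod (fun j _ => norm_nonneg _)
                intro j _
                rw [norm_pow]
                exact pow_le_pow_left₀ (norm_nonneg _) (hx j) _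
            _ = t ^ (mdeg m) := by rw [Finset.prod_pow_eq_pow_sum, ← mdeg_eq_sum]
        exact mul_le_mul (hc m) habs (norm_nonneg _) hN
    _ = N * ∑ m ∈ p.support, t ^ (mdeg m) := by rw [Finset.mul_sum]
    _ ≤ N * ∑ k ∈ Finset.Icc 2 d, (n : ℝ) ^ k * t ^ k := by
        apply mul_le_mul_of_nonneg_left _ hN
        exact sum_support_weight hn hdeg h0 h1 (fun k => t ^ k) (fun k => pow_nonneg ht k)

lemma abs_eval_sub_le {n d : ℕ} (hn : 1 ≤ n) {p : MvPolynomial (Fin n) ℂ} {N : ℝ}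
    (hc : ∀ m, ‖MvPolynomial.coeff m p‖ ≤ N)
    (hdeg : p.totalDegree ≤ d)
    (h0 : MvPolynomial.coeff 0 p = 0) (h1 : ∀ j, MvPolynomial.coeff (Finsupp.single j 1) p = 0)
    (x x' : Fin n → ℂ) {t δ : ℝ} (ht : 0 ≤ t) (hδ : 0 ≤ δ)
    (hx : ∀ j, ‖x j‖ ≤ t) (hx' : ∀ j, ‖x' j‖ ≤ t)
    (hdiff : ∀ j, ‖x j - x' j‖ ≤ δ) :
    ‖MvPolynomial.eval x p - MvPolynomial.eval x' p‖
      ≤ (N * ∑ k ∈ Finset.Icc 2 d, (n : ℝ) ^ k * ((k : ℝ) * t ^ (k - 1))) * δ := by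
  classical
  have hN : 0 ≤ N := le_trans (norm_nonneg _) (hc 0)
  rw [MvPolynomial.eval_eq', MvPolynomial.eval_eq', ← Finset.sum_sub_distrib]
  calc ‖∑ m ∈ p.support,
        (MvPolynomial.coeff m p * ∏ j, x j ^ m j - MvPolynomial.coeff m p * ∏ j, x' j ^ m j)‖
      ≤ ∑ m ∈ p.support, ‖MvPolynomial.coeff m p * ∏ j, x j ^ m j - MvPolynomial.coeff m p * ∏ j, x' j ^ m j‖ :=
        norm_sum_le _ _
    _ ≤ ∑ m ∈ p.support, N * ((mdeg m : ℝ) * t ^ (mdeg m - 1) * δ) := by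
        apply Finset.sum_le_sum
        intro m _
        rw [← mul_sub, norm_mul]
        exact mul_le_mul (hc m) (abs_monomial_sub m x x' ht hδ hx hx' hdiff)
          (norm_nonneg _) hN
    _ = (N * ∑ m ∈ p.support, (mdeg m : ℝ) * t ^ (mdeg m - 1)) * δ := by
        rw [Finset.mul_sum, Finset.sum_mul]
        apply Finset.sum_congr rfl
        intros; ring
    _ ≤ (N * ∑ k ∈ Finset.Icc 2 d, (n : ℝ) ^ k * ((k : ℝ) * t ^ (k - 1))) * δ := by
        apply mul_le_mul_of_nonneg_right _ hδ
        apply mul_le_mul_of_nonneg_left _ hN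
        exact sum_support_weight hn hdeg h0 h1 (fun k => (k : ℝ) * t ^ (k - 1))
          (fun k => by positivity)

lemma geom_le {x : ℝ} (h0 : 0 ≤ x) (h1 : x < 1) (L : ℕ) :
    ∑ i ∈ Finset.range L, x ^ i ≤ 1 / (1 - x) := by
  rw [le_div_iff₀ (by linarith)]
  have hgs := geom_sum_mul x L
  nlinarith [pow_nonneg h0 L]

lemma three_add_le_pow (i : ℕ) : (3 + i : ℝ) ≤ 3 * 2 ^ i := by
  have h : 3 + i ≤ 3 * 2 ^ i := by
    induction i with
    | zero => simp
    | succ i ih =>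
      have h2 : 1 ≤ 3 * 2 ^ i :=
        le_trans Nat.one_le_two_pow (Nat.le_mul_of_pos_left _ (by norm_num))
      calc 3 + (i + 1) = (3 + i) + 1 := by ring
        _ ≤ 3 * 2 ^ i + 3 * 2 ^ i := Nat.add_le_add ih h2
        _ = 3 * 2 ^ (i + 1) := by ring
  exact_mod_cast h

lemma core_pow (n d : ℕ) (hn : 1 ≤ n) (hd : 2 ≤ d) (i : ℕ) :
    (2:ℝ) ^ (2 + 2*i) * (n:ℝ) ^ (2 + i) ≤ ((2 * (n:ℝ)) ^ d) ^ (1 + i) := by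
  have hn1 : (1:ℝ) ≤ (n:ℝ) := by exact_mod_cast hn
  have h2n : (1:ℝ) ≤ 2 * (n:ℝ) := by linarith
  calc (2:ℝ) ^ (2 + 2*i) * (n:ℝ) ^ (2 + i)
      ≤ (2:ℝ) ^ (2 + 2*i) * (n:ℝ) ^ (2 + 2*i) := by
        apply mul_le_mul_of_nonneg_left (pow_le_pow_right₀ hn1 (by omega)) (by positivity)
    _ = (2 * (n:ℝ)) ^ (2 + 2*i) := by rw [mul_pow]
    _ = ((2 * (n:ℝ)) ^ 2) ^ (1 + i) := by rw [← pow_mul]; congr 1; omega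
    _ ≤ ((2 * (n:ℝ)) ^ d) ^ (1 + i) := by
        apply pow_le_pow_left₀ (by positivity) (pow_le_pow_right₀ h2n hd) _

lemma term1 (n d : ℕ) (hn : 1 ≤ n) (hd : 2 ≤ d) (N : ℝ) (hN : 0 ≤ N) (i : ℕ) :
    N * ((n:ℝ) ^ (2 + i) * (2 * (1 / ((2 * (n:ℝ)) ^ d * (1 + N)))) ^ (2 + i))
      ≤ (1 / ((2 * (n:ℝ)) ^ d * (1 + N))) * ((N / (1 + N)) * (1 / (2 * (1 + N))) ^ i) := by
  have hn1 : (1:ℝ) ≤ (n:ℝ) := by exact_mod_cast hn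
  set Q : ℝ := (2 * (n:ℝ)) ^ d with hQ
  set M : ℝ := 1 + N with hM
  have hQpos : 0 < Q := by positivity
  have hMpos : 0 < M := by rw [hM]; linarith
  have hL : N * ((n:ℝ) ^ (2 + i) * (2 * (1 / (Q * M))) ^ (2 + i))
      = (N * (n:ℝ) ^ (2 + i) * 2 ^ (2 + i)) / (Q ^ (2 + i) * M ^ (2 + i)) := by
    rw [mul_pow, div_pow, one_pow, mul_pow]
    field_simp
  have hR : (1 / (Q * M)) * ((N / M) * (1 / (2 * M)) ^ i)
      = N / (Q * 2 ^ i * M ^ (2 + i)) := by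
    rw [div_pow, one_pow, mul_pow]
    field_simp
    first
    | (left; ring)
    | (left; trivial)
    | ring
    | tauto
  rw [hL, hR, div_le_div_iff₀ (by positivity) (by positivity)]
  have hcore := core_pow n d hn hd i
  calc N * (n:ℝ) ^ (2 + i) * 2 ^ (2 + i) * (Q * 2 ^ i * M ^ (2 + i))
      = (N * M ^ (2 + i) * Q) * ((2:ℝ) ^ (2 + 2*i) * (n:ℝ) ^ (2 + i)) := by ring
    _ ≤ (N * M ^ (2 + i) * Q) * Q ^ (1 + i) := by
        apply mul_le_mul_of_nonneg_left hcore (by positivity)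
    _ = N * (Q ^ (2 + i) * M ^ (2 + i)) := by ring

lemma term2 (n d : ℕ) (hn : 1 ≤ n) (hd : 2 ≤ d) (N : ℝ) (hN : 0 ≤ N) (i : ℕ) :
    N * ((n:ℝ) ^ (2 + i) * (((2 + i : ℕ) : ℝ)
        * (2 * (1 / ((2 * (n:ℝ)) ^ d * (1 + N)))) ^ ((2 + i) - 1)))
      ≤ ((2 + (i:ℝ)) / 2) * ((N / (1 + N)) * (1 / (2 * (1 + N))) ^ i) := by
  have hn1 : (1:ℝ) ≤ (n:ℝ) := by exact_mod_cast hn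
  set Q : ℝ := (2 * (n:ℝ)) ^ d with hQ
  set M : ℝ := 1 + N with hM
  have hQpos : 0 < Q := by positivity
  have hMpos : 0 < M := by rw [hM]; linarith
  have he : (2 + i) - 1 = 1 + i := by omega
  rw [he]
  have hcast : ((2 + i : ℕ) : ℝ) = 2 + (i:ℝ) := by push_cast; ring
  rw [hcast]
  have hL : N * ((n:ℝ) ^ (2 + i) * ((2 + (i:ℝ)) * (2 * (1 / (Q * M))) ^ (1 + i)))
      = ((2 + (i:ℝ)) * N * (n:ℝ) ^ (2 + i) * 2 ^ (1 + i)) / (Q ^ (1 + i) * M ^ (1 + i)) := by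
    rw [mul_pow, div_pow, one_pow, mul_pow]
    field_simp
  have hR : ((2 + (i:ℝ)) / 2) * ((N / M) * (1 / (2 * M)) ^ i)
      = ((2 + (i:ℝ)) * N) / (2 ^ (1 + i) * M ^ (1 + i)) := by
    rw [div_pow, one_pow, mul_pow]
    field_simp
    first
    | (left; ring)
    | (left; trivial)
    | ring
    | tauto
  rw [hL, hR, div_le_div_iff₀ (by positivity) (by positivity)]
  have hcore := core_pow n d hn hd i
  have hinn : (0:ℝ) ≤ (2 + (i:ℝ)) * N * M ^ (1 + i) := by positivity
  calc (2 + (i:ℝ)) * N * (n:ℝ) ^ (2 + i) * 2 ^ (1 + i) * (2 ^ (1 + i) * M ^ (1 + i))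
      = ((2 + (i:ℝ)) * N * M ^ (1 + i)) * ((2:ℝ) ^ (2 + 2*i) * (n:ℝ) ^ (2 + i)) := by ring
    _ ≤ ((2 + (i:ℝ)) * N * M ^ (1 + i)) * Q ^ (1 + i) := mul_le_mul_of_nonneg_left hcore hinn
    _ = (2 + (i:ℝ)) * N * (Q ^ (1 + i) * M ^ (1 + i)) := by ring

lemma div_geom_le (N : ℝ) (hN : 0 ≤ N) (L : ℕ) :
    (N / (1 + N)) * ∑ i ∈ Finset.range L, (2 * (1 / (2 * (1 + N)))) ^ i ≤ 1 := by
  have hM : (0:ℝ) < 1 + N := by linarith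
  have h2x : 2 * (1 / (2 * (1 + N))) = 1 / (1 + N) := by
    field_simp
  rw [h2x]
  rcases eq_or_lt_of_le hN with hN0 | hNpos
  · rw [← hN0]
    simp
  · have hx0 : (0:ℝ) ≤ 1 / (1 + N) := by positivity
    have hx1 : 1 / (1 + N) < 1 := by
      rw [div_lt_one hM]; linarith
    have hgeom := geom_le hx0 hx1 L
    have h1x : 1 - 1 / (1 + N) = N / (1 + N) := by
      field_simp
      ring
    have hgeom2 : ∑ i ∈ Finset.range L, (1 / (1 + N)) ^ i ≤ (1 + N) / N := by
      refine le_trans hgeom ?_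
      rw [h1x, one_div_div]
    calc (N / (1 + N)) * ∑ i ∈ Finset.range L, (1 / (1 + N)) ^ i
        ≤ (N / (1 + N)) * ((1 + N) / N) := by
          apply mul_le_mul_of_nonneg_left hgeom2 (by positivity)
      _ = 1 := by field_simp

lemma sum1_le (n d : ℕ) (hn : 1 ≤ n) (hd : 2 ≤ d) (N : ℝ) (hN : 0 ≤ N) :
    N * ∑ k ∈ Finset.Icc 2 d, (n:ℝ) ^ k * (2 * (1 / ((2 * (n:ℝ)) ^ d * (1 + N)))) ^ k
      ≤ 1 / ((2 * (n:ℝ)) ^ d * (1 + N)) := by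
  have hn1 : (1:ℝ) ≤ (n:ℝ) := by exact_mod_cast hn
  have hMpos : (0:ℝ) < 1 + N := by linarith
  have hrpos : (0:ℝ) < 1 / ((2 * (n:ℝ)) ^ d * (1 + N)) := by positivity
  rw [Finset.mul_sum, ← Finset.Ico_add_one_right_eq_Icc, Finset.sum_Ico_eq_sum_range]
  have hstep : ∑ i ∈ Finset.range (d + 1 - 2),
      N * ((n:ℝ) ^ (2 + i) * (2 * (1 / ((2 * (n:ℝ)) ^ d * (1 + N)))) ^ (2 + i))
      ≤ ∑ i ∈ Finset.range (d + 1 - 2),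
        (1 / ((2 * (n:ℝ)) ^ d * (1 + N))) * ((N / (1 + N)) * (1 / (2 * (1 + N))) ^ i) :=
    Finset.sum_le_sum fun i _ => term1 n d hn hd N hN i
  refine le_trans hstep ?_
  rw [← Finset.mul_sum, ← Finset.mul_sum]
  have hx0 : (0:ℝ) ≤ 1 / (2 * (1 + N)) := by positivity
  have hx1 : 1 / (2 * (1 + N)) < 1 := by
    rw [div_lt_one (by linarith)]; linarith
  have hgeom := geom_le hx0 hx1 (d + 1 - 2)
  have hkey : (N / (1 + N)) * ∑ i ∈ Finset.range (d + 1 - 2), (1 / (2 * (1 + N))) ^ i ≤ 1 := by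
    have h1x : 1 - 1 / (2 * (1 + N)) = (1 + 2 * N) / (2 * (1 + N)) := by
      field_simp; ring
    have hgeom2 : ∑ i ∈ Finset.range (d + 1 - 2), (1 / (2 * (1 + N))) ^ i
        ≤ (2 * (1 + N)) / (1 + 2 * N) := by
      refine le_trans hgeom ?_
      rw [h1x, one_div_div]
    calc (N / (1 + N)) * ∑ i ∈ Finset.range (d + 1 - 2), (1 / (2 * (1 + N))) ^ i
        ≤ (N / (1 + N)) * ((2 * (1 + N)) / (1 + 2 * N)) := by
          apply mul_le_mul_of_nonneg_left hgeom2 (by positivity)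
      _ = (2 * N) / (1 + 2 * N) := by
          field_simp
      _ ≤ 1 := by
          rw [div_le_one (by linarith)]; linarith
  calc (1 / ((2 * (n:ℝ)) ^ d * (1 + N)))
        * ((N / (1 + N)) * ∑ i ∈ Finset.range (d + 1 - 2), (1 / (2 * (1 + N))) ^ i)
      ≤ (1 / ((2 * (n:ℝ)) ^ d * (1 + N))) * 1 := by
        apply mul_le_mul_of_nonneg_left hkey (le_of_lt hrpos)
    _ = 1 / ((2 * (n:ℝ)) ^ d * (1 + N)) := mul_one _

lemma sum2_le (n d : ℕ) (hn : 1 ≤ n) (hd : 2 ≤ d) (N : ℝ) (hN : 0 ≤ N) :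
    N * ∑ k ∈ Finset.Icc 2 d,
        (n:ℝ) ^ k * ((k:ℝ) * (2 * (1 / ((2 * (n:ℝ)) ^ d * (1 + N)))) ^ (k - 1))
      ≤ (4 * N + 3) / (4 * (1 + N)) := by
  have hn1 : (1:ℝ) ≤ (n:ℝ) := by exact_mod_cast hn
  have hMpos : (0:ℝ) < 1 + N := by linarith
  rw [Finset.mul_sum, ← Finset.Ico_add_one_right_eq_Icc, Finset.sum_Ico_eq_sum_range]
  have hstep : ∑ i ∈ Finset.range (d + 1 - 2),
      N * ((n:ℝ) ^ (2 + i)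
        * (((2 + i : ℕ):ℝ) * (2 * (1 / ((2 * (n:ℝ)) ^ d * (1 + N)))) ^ ((2 + i) - 1)))
      ≤ ∑ i ∈ Finset.range (d + 1 - 2),
        ((2 + (i:ℝ)) / 2) * ((N / (1 + N)) * (1 / (2 * (1 + N))) ^ i) :=
    Finset.sum_le_sum fun i _ => term2 n d hn hd N hN i
  refine le_trans hstep ?_
  have hL : d + 1 - 2 = (d - 2) + 1 := by omega
  rw [hL, Finset.sum_range_succ']
  have hterm : ∀ i : ℕ,
      ((2 + ((i + 1 : ℕ):ℝ)) / 2) * ((N / (1 + N)) * (1 / (2 * (1 + N))) ^ (i + 1))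
      ≤ ((3:ℝ) / 4) * (1 / (1 + N)) * ((N / (1 + N)) * (2 * (1 / (2 * (1 + N)))) ^ i) := by
    intro i
    have h3 : (2 + ((i + 1 : ℕ):ℝ)) = 3 + (i:ℝ) := by push_cast; ring
    rw [h3]
    have hb := three_add_le_pow i
    have hrest : (0:ℝ) ≤ (N / (1 + N)) * (1 / (2 * (1 + N))) ^ (i + 1) := by positivity
    calc ((3 + (i:ℝ)) / 2) * ((N / (1 + N)) * (1 / (2 * (1 + N))) ^ (i + 1))
        ≤ ((3 * 2 ^ i : ℝ) / 2) * ((N / (1 + N)) * (1 / (2 * (1 + N))) ^ (i + 1)) := by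
          apply mul_le_mul_of_nonneg_right _ hrest
          exact (div_le_div_iff_of_pos_right (by norm_num)).mpr hb
      _ = ((3:ℝ) / 4) * (1 / (1 + N)) * ((N / (1 + N)) * (2 * (1 / (2 * (1 + N)))) ^ i) := by
          rw [mul_pow, one_div_pow, one_div_pow, mul_pow, pow_succ, mul_pow]
          field_simp
          ring
  have htail : ∑ i ∈ Finset.range (d - 2),
      ((2 + ((i + 1 : ℕ):ℝ)) / 2) * ((N / (1 + N)) * (1 / (2 * (1 + N))) ^ (i + 1))
      ≤ 3 / (4 * (1 + N)) := by
    calc ∑ i ∈ Finset.range (d - 2),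
        ((2 + ((i + 1 : ℕ):ℝ)) / 2) * ((N / (1 + N)) * (1 / (2 * (1 + N))) ^ (i + 1))
        ≤ ∑ i ∈ Finset.range (d - 2),
          ((3:ℝ) / 4) * (1 / (1 + N)) * ((N / (1 + N)) * (2 * (1 / (2 * (1 + N)))) ^ i) :=
          Finset.sum_le_sum fun i _ => hterm i
      _ = ((3:ℝ) / 4) * (1 / (1 + N))
          * ((N / (1 + N)) * ∑ i ∈ Finset.range (d - 2), (2 * (1 / (2 * (1 + N)))) ^ i) := by
          rw [← Finset.mul_sum, ← Finset.mul_sum]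
      _ ≤ ((3:ℝ) / 4) * (1 / (1 + N)) * 1 := by
          apply mul_le_mul_of_nonneg_left (div_geom_le N hN _) (by positivity)
      _ = 3 / (4 * (1 + N)) := by rw [mul_one]; field_simp
  have hfirst : ((2 + ((0:ℕ):ℝ)) / 2) * ((N / (1 + N)) * (1 / (2 * (1 + N))) ^ (0:ℕ))
      = N / (1 + N) := by norm_num
  have hsplit : N / (1 + N) + 3 / (4 * (1 + N)) = (4 * N + 3) / (4 * (1 + N)) := by
    field_simp
  calc (∑ i ∈ Finset.range (d - 2),
        ((2 + ((i + 1 : ℕ):ℝ)) / 2) * ((N / (1 + N)) * (1 / (2 * (1 + N))) ^ (i + 1)))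
      + ((2 + ((0:ℕ):ℝ)) / 2) * ((N / (1 + N)) * (1 / (2 * (1 + N))) ^ (0:ℕ))
      ≤ 3 / (4 * (1 + N)) + N / (1 + N) := by
        rw [hfirst]
        exact add_le_add_left htail _
    _ = (4 * N + 3) / (4 * (1 + N)) := by rw [add_comm, hsplit]

lemma analyticAt_eval {n : ℕ} (p : MvPolynomial (Fin n) ℂ) (x : Fin n → ℂ) :
    AnalyticAt ℂ (fun x : Fin n → ℂ => MvPolynomial.eval x p) x := by
  induction p using MvPolynomial.induction_on with
  | C a =>
    exact (analyticAt_const (v := a)).congr (Filter.Eventually.of_forall fun z => by simp)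
  | add p q hp hq =>
    exact (hp.add hq).congr (Filter.Eventually.of_forall fun z => by simp)
  | mul_X p i hp =>
    have hXi : AnalyticAt ℂ (fun x : Fin n → ℂ => x i) x :=
      (ContinuousLinearMap.proj (R := ℂ) (φ := fun _ : Fin n => ℂ) i).analyticAt x
    exact (hp.mul hXi).congr (Filter.Eventually.of_forall fun z => by simp)

end ALIAux

open ALIAux Topology in
/-- The fixed-point equation `F(y) = y + V(F(y))` has an analytic solution with `F(0) = 0`
on the ball `‖y‖_∞ < 1 / ((2n)^d (1 + ‖V‖))`; in particular `F` is a local analytic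
inverse of `x ↦ x - V(x)`. -/
theorem analytic_local_inverse (n d : ℕ) (hn : 1 ≤ n) (hd : 2 ≤ d)
    (V : Fin n → MvPolynomial (Fin n) ℂ)
    (hdeg : ∀ i, (V i).totalDegree ≤ d)
    (hV0 : ∀ i, MvPolynomial.coeff 0 (V i) = 0)
    (hV1 : ∀ i j, MvPolynomial.coeff (Finsupp.single j 1) (V i) = 0) :
    ∃ F : (Fin n → ℂ) → (Fin n → ℂ),
      AnalyticOn ℂ F {y : Fin n → ℂ | ‖y‖ < 1 / ((2 * n) ^ d * (1 + coeffNorm V))} ∧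
      F 0 = 0 ∧
      ∀ y ∈ {y : Fin n → ℂ | ‖y‖ < 1 / ((2 * n) ^ d * (1 + coeffNorm V))},
        F y = fun i => y i + MvPolynomial.eval (F y) (V i) := by
  classical
  -- coefficient bound facts
  have hbdd : BddAbove {r : ℝ | ∃ (i : Fin n) (m : Fin n →₀ ℕ),
      r = ‖MvPolynomial.coeff m (V i)‖} := by
    refine ⟨∑ i : Fin n, ∑ m' ∈ (V i).support, ‖MvPolynomial.coeff m' (V i)‖, ?_⟩
    rintro r ⟨i, m, rfl⟩
    by_cases hm : m ∈ (V i).support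
    · calc ‖MvPolynomial.coeff m (V i)‖
          ≤ ∑ m' ∈ (V i).support, ‖MvPolynomial.coeff m' (V i)‖ :=
            Finset.single_le_sum (fun _ _ => norm_nonneg _) hm
        _ ≤ ∑ i' : Fin n, ∑ m' ∈ (V i').support, ‖MvPolynomial.coeff m' (V i')‖ :=
            Finset.single_le_sum
              (f := fun i' => ∑ m' ∈ (V i').support, ‖MvPolynomial.coeff m' (V i')‖)
              (fun _ _ => Finset.sum_nonneg fun _ _ => norm_nonneg _) (Finset.mem_univ i)
    · rw [MvPolynomial.notMem_support_iff.1 hm, norm_zero]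
      exact Finset.sum_nonneg fun _ _ => Finset.sum_nonneg fun _ _ => norm_nonneg _
  set N := coeffNorm V with hNdef
  have hcoeff : ∀ (i : Fin n) (m : Fin n →₀ ℕ), ‖MvPolynomial.coeff m (V i)‖ ≤ N :=
    fun i m => le_csSup hbdd ⟨i, m, rfl⟩
  have hN0 : 0 ≤ N := le_trans (norm_nonneg _) (hcoeff ⟨0, hn⟩ 0)
  have hn1 : (1:ℝ) ≤ (n:ℝ) := by exact_mod_cast hn
  have hMpos : (0:ℝ) < 1 + N := by linarith
  set r : ℝ := 1 / ((2 * (n:ℝ)) ^ d * (1 + N)) with hr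
  have hrpos : 0 < r := by
    rw [hr]
    have h2n : (0:ℝ) < 2 * (n:ℝ) := by linarith
    positivity
  set ρ : ℝ := 2 * r with hρ
  have hρpos : 0 < ρ := by rw [hρ]; linarith
  set c₀ : ℝ := (4 * N + 3) / (4 * (1 + N)) with hc₀
  have hc00 : 0 ≤ c₀ := by rw [hc₀]; positivity
  have hc01 : c₀ < 1 := by
    rw [hc₀, div_lt_one (by linarith)]
    linarith
  -- norm helpers
  have normCoord : ∀ (x : Fin n → ℂ) (t : ℝ), ‖x‖ ≤ t → ∀ j, ‖x j‖ ≤ t := by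
    intro x t hx j
    calc ‖x j‖ = ‖x j‖ := rfl
      _ ≤ ‖x‖ := norm_le_pi_norm x j
      _ ≤ t := hx
  set Vmap : (Fin n → ℂ) → (Fin n → ℂ) := fun x i => MvPolynomial.eval x (V i) with hVmap
  have VmapBound : ∀ x : Fin n → ℂ, ‖x‖ ≤ ρ → ‖Vmap x‖ ≤ r := by
    intro x hx
    rw [pi_norm_le_iff_of_nonneg (le_of_lt hrpos)]
    intro i
    calc ‖Vmap x i‖ = ‖MvPolynomial.eval x (V i)‖ := by
          rw [hVmap]
      _ ≤ N * ∑ k ∈ Finset.Icc 2 d, (n:ℝ) ^ k * ρ ^ k :=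
          abs_eval_le hn (hcoeff i) (hdeg i) (hV0 i) (hV1 i) x (le_of_lt hρpos)
            (normCoord x ρ hx)
      _ ≤ r := by
          have := sum1_le n d hn hd N hN0
          rw [← hr, ← hρ] at this
          exact this
  have VmapLip : ∀ x x' : Fin n → ℂ, ‖x‖ ≤ ρ → ‖x'‖ ≤ ρ →
      ‖Vmap x - Vmap x'‖ ≤ c₀ * ‖x - x'‖ := by
    intro x x' hx hx'
    rw [pi_norm_le_iff_of_nonneg (by positivity)]
    intro i
    have hdiffj : ∀ j, ‖x j - x' j‖ ≤ ‖x - x'‖ := by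
      intro j
      have h := norm_le_pi_norm (x - x') j
      simpa using h
    calc ‖(Vmap x - Vmap x') i‖
        = ‖MvPolynomial.eval x (V i) - MvPolynomial.eval x' (V i)‖ := by
          rw [hVmap]
          simp
      _ ≤ (N * ∑ k ∈ Finset.Icc 2 d, (n:ℝ) ^ k * ((k:ℝ) * ρ ^ (k - 1))) * ‖x - x'‖ :=
          abs_eval_sub_le hn (hcoeff i) (hdeg i) (hV0 i) (hV1 i) x x' (le_of_lt hρpos)
            (norm_nonneg _) (normCoord x ρ hx) (normCoord x' ρ hx') hdiffj
      _ ≤ c₀ * ‖x - x'‖ := by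
          apply mul_le_mul_of_nonneg_right _ (norm_nonneg _)
          have := sum2_le n d hn hd N hN0
          rw [← hr, ← hρ, ← hc₀] at this
          exact this
  have hcball : ∀ (y x : Fin n → ℂ), ‖y‖ < r → ‖x‖ ≤ ρ → ‖y + Vmap x‖ < ρ := by
    intro y x hy hx
    calc ‖y + Vmap x‖ ≤ ‖y‖ + ‖Vmap x‖ := norm_add_le _ _
      _ < r + r := add_lt_add_of_lt_of_le hy (VmapBound x hx)
      _ = ρ := by rw [hρ]; ring
  -- existence and uniqueness of the fixed point
  have main : ∀ y : Fin n → ℂ, ‖y‖ < r →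
      ∃ x : Fin n → ℂ, ‖x‖ ≤ ρ ∧ x = y + Vmap x ∧
        ∀ x' : Fin n → ℂ, ‖x'‖ ≤ ρ → x' = y + Vmap x' → x' = x := by
    intro y hy
    haveI hne : Nonempty (Metric.closedBall (0 : Fin n → ℂ) ρ) :=
      ⟨⟨0, Metric.mem_closedBall_self (le_of_lt hρpos)⟩⟩
    haveI hcs : CompleteSpace (Metric.closedBall (0 : Fin n → ℂ) ρ) :=
      IsClosed.completeSpace_coe (hs := Metric.isClosed_closedBall)
    set φ : Metric.closedBall (0 : Fin n → ℂ) ρ → Metric.closedBall (0 : Fin n → ℂ) ρ :=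
      fun x => ⟨y + Vmap x.1, by
        rw [mem_closedBall_zero_iff]
        exact le_of_lt (hcball y x.1 hy (mem_closedBall_zero_iff.1 x.2))⟩ with hφ
    have hlip : LipschitzWith ⟨c₀, hc00⟩ φ := by
      apply LipschitzWith.of_dist_le_mul
      intro a b
      have hl := VmapLip a.1 b.1 (mem_closedBall_zero_iff.1 a.2) (mem_closedBall_zero_iff.1 b.2)
      calc dist (φ a) (φ b) = ‖(y + Vmap a.1) - (y + Vmap b.1)‖ := by
            rw [Subtype.dist_eq, dist_eq_norm]
        _ = ‖Vmap a.1 - Vmap b.1‖ := by congr 1; abel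
        _ ≤ c₀ * ‖a.1 - b.1‖ := hl
        _ = c₀ * dist a b := by rw [Subtype.dist_eq, dist_eq_norm]
    have hcontr : ContractingWith ⟨c₀, hc00⟩ φ := ⟨by exact_mod_cast hc01, hlip⟩
    set xfix := ContractingWith.fixedPoint φ hcontr with hxfix
    have hfp : φ xfix = xfix := hcontr.fixedPoint_isFixedPt
    refine ⟨xfix.1, mem_closedBall_zero_iff.1 xfix.2, ?_, ?_⟩
    · exact (congrArg Subtype.val hfp).symm
    · intro x' hx' heq
      have hmem : x' ∈ Metric.closedBall (0 : Fin n → ℂ) ρ := mem_closedBall_zero_iff.2 hx'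
      have hfp' : Function.IsFixedPt φ ⟨x', hmem⟩ := Subtype.ext heq.symm
      exact congrArg Subtype.val (hcontr.fixedPoint_unique hfp')
  -- define F
  set F : (Fin n → ℂ) → (Fin n → ℂ) :=
    fun y => if hy : ‖y‖ < r then (main y hy).choose else 0 with hF
  have hFy : ∀ (y : Fin n → ℂ) (hy : ‖y‖ < r), F y = (main y hy).choose := by
    intro y hy
    rw [hF]
    exact dif_pos hy
  have hFnorm : ∀ (y : Fin n → ℂ) (hy : ‖y‖ < r), ‖F y‖ ≤ ρ := by
    intro y hy
    rw [hFy y hy]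
    exact (main y hy).choose_spec.1
  have hFeq : ∀ (y : Fin n → ℂ) (hy : ‖y‖ < r), F y = y + Vmap (F y) := by
    intro y hy
    rw [hFy y hy]
    exact (main y hy).choose_spec.2.1
  have hFuniq : ∀ (y : Fin n → ℂ) (hy : ‖y‖ < r) (x' : Fin n → ℂ),
      ‖x'‖ ≤ ρ → x' = y + Vmap x' → x' = F y := by
    intro y hy x' hx' heq
    rw [hFy y hy]
    exact (main y hy).choose_spec.2.2 x' hx' heq
  refine ⟨F, ?_, ?_, ?_⟩
  · -- analyticity
    intro y₀ hy₀mem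
    have hy₀ : ‖y₀‖ < r := hy₀mem
    have hx₀ρ := hFnorm y₀ hy₀
    have hx₀eq := hFeq y₀ hy₀
    have hx₀lt : ‖F y₀‖ < ρ := by
      calc ‖F y₀‖ = ‖y₀ + Vmap (F y₀)‖ := by rw [← hx₀eq]
        _ < ρ := hcball y₀ (F y₀) hy₀ hx₀ρ
    set G : (Fin n → ℂ) → (Fin n → ℂ) := fun x => x - Vmap x with hG
    have hVana : ∀ z : Fin n → ℂ, AnalyticAt ℂ Vmap z := by
      intro z
      rw [hVmap]
      exact AnalyticAt.pi (fun i => analyticAt_eval (V i) z)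
    have hGana : ∀ z : Fin n → ℂ, AnalyticAt ℂ G z := by
      intro z
      rw [hG]
      exact analyticAt_id.sub (hVana z)
    have hGx₀ : G (F y₀) = y₀ := sub_eq_of_eq_add hx₀eq
    set A := fderiv ℂ Vmap (F y₀) with hA
    have hVfd : HasFDerivAt Vmap A (F y₀) := (hVana _).differentiableAt.hasFDerivAt
    have hAle : ‖A‖ ≤ c₀ := by
      apply hVfd.le_of_lip' hc00
      have hball : Metric.ball (0 : Fin n → ℂ) ρ ∈ 𝓝 (F y₀) :=
        Metric.isOpen_ball.mem_nhds (mem_ball_zero_iff.2 hx₀lt)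
      filter_upwards [hball] with z hz
      exact VmapLip z (F y₀) (le_of_lt (mem_ball_zero_iff.1 hz)) hx₀ρ
    have hA1 : ‖A‖ < 1 := lt_of_le_of_lt hAle hc01
    set u : ((Fin n → ℂ) →L[ℂ] (Fin n → ℂ))ˣ := Units.oneSub A hA1 with hu
    set L' : (Fin n → ℂ) ≃L[ℂ] (Fin n → ℂ) := ContinuousLinearEquiv.equivOfInverse u.1 ↑u⁻¹
      (fun z => by rw [← ContinuousLinearMap.mul_apply, u.inv_mul, ContinuousLinearMap.one_apply])
      (fun z => by rw [← ContinuousLinearMap.mul_apply, u.mul_inv, ContinuousLinearMap.one_apply])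
      with hL'
    have hL'coe : (L' : (Fin n → ℂ) →L[ℂ] (Fin n → ℂ)) = 1 - A := by
      ext z
      rw [hL']
      rw [ContinuousLinearEquiv.coe_coe, ContinuousLinearEquiv.equivOfInverse_apply]
      rw [hu, Units.val_oneSub]
    have hGfd : HasFDerivAt G ((1 : (Fin n → ℂ) →L[ℂ] (Fin n → ℂ)) - A) (F y₀) := by
      have h1 := (hasFDerivAt_id (𝕜 := ℂ) (F y₀)).sub hVfd
      rw [hG]
      rw [ContinuousLinearMap.one_def]
      exact h1
    have hGstrict : HasStrictFDerivAt G (L' : (Fin n → ℂ) →L[ℂ] (Fin n → ℂ)) (F y₀) := by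
      have hs := (hGana (F y₀)).hasStrictFDerivAt
      have hfd : fderiv ℂ G (F y₀) = (L' : (Fin n → ℂ) →L[ℂ] (Fin n → ℂ)) := by
        rw [hGfd.fderiv, hL'coe]
      rwa [hfd] at hs
    obtain ⟨pser, hpser⟩ := hGana (F y₀)
    have hp1 : pser 1 = (continuousMultilinearCurryFin1 ℂ (Fin n → ℂ) (Fin n → ℂ)).symm
        (L' : (Fin n → ℂ) →L[ℂ] (Fin n → ℂ)) := by
      have h1 := hpser.hasFDerivAt
      have h2 := hGstrict.hasFDerivAt
      have h3 : continuousMultilinearCurryFin1 ℂ (Fin n → ℂ) (Fin n → ℂ) (pser 1)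
          = (L' : (Fin n → ℂ) →L[ℂ] (Fin n → ℂ)) := h1.unique h2
      rw [← h3]
      simp
    set f := hGstrict.toOpenPartialHomeomorph G with hf
    have hsrc : F y₀ ∈ f.source := hGstrict.mem_toOpenPartialHomeomorph_source
    have hcoe : ⇑f = G := hGstrict.toOpenPartialHomeomorph_coe
    have hfx₀ : f (F y₀) = y₀ := by
      rw [show f (F y₀) = G (F y₀) from congrFun hcoe (F y₀)]
      exact hGx₀
    have hps : HasFPowerSeriesAt (⇑f) pser (F y₀) := by rw [hcoe]; exact hpser
    have hsymm := f.hasFPowerSeriesAt_symm hsrc hps hp1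
    have hana_symm : AnalyticAt ℂ (⇑f.symm) y₀ := by
      have h4 : AnalyticAt ℂ (⇑f.symm) (f (F y₀)) := ⟨_, hsymm⟩
      rwa [hfx₀] at h4
    have he1 : ∀ᶠ y in 𝓝 y₀, ‖y‖ < r :=
      continuous_norm.continuousAt.eventually (eventually_lt_nhds hy₀)
    have he2 : ∀ᶠ y in 𝓝 y₀, f (f.symm y) = y := by
      have h5 := f.eventually_right_inverse' hsrc
      rwa [hfx₀] at h5
    have hsymm_y₀ : f.symm y₀ = F y₀ := by
      conv_lhs => rw [← hfx₀]
      exact f.left_inv hsrc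
    have hsymm_cont : ContinuousAt (⇑f.symm) y₀ := by
      apply f.symm.continuousAt
      rw [OpenPartialHomeomorph.symm_source, ← hfx₀]
      exact f.map_source hsrc
    have he3 : ∀ᶠ y in 𝓝 y₀, ‖f.symm y‖ < ρ := by
      have hball : Metric.ball (0 : Fin n → ℂ) ρ ∈ 𝓝 (f.symm y₀) := by
        rw [hsymm_y₀]
        exact Metric.isOpen_ball.mem_nhds (mem_ball_zero_iff.2 hx₀lt)
      exact (hsymm_cont.eventually_mem hball).mono fun y hy => mem_ball_zero_iff.1 hy
    have heq : ∀ᶠ y in 𝓝 y₀, F y = f.symm y := by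
      filter_upwards [he1, he2, he3] with y h1 h2 h3
      have hGz : G (f.symm y) = y := by
        rw [← congrFun hcoe (f.symm y)]
        exact h2
      have hGz' : f.symm y - Vmap (f.symm y) = y := hGz
      have hz : f.symm y = y + Vmap (f.symm y) := sub_eq_iff_eq_add.1 hGz'
      exact (hFuniq y h1 (f.symm y) (le_of_lt h3) hz).symm
    have hFana : AnalyticAt ℂ F y₀ := hana_symm.congr (Filter.EventuallyEq.symm heq)
    exact hFana.analyticWithinAt
  · -- F 0 = 0
    have h0r : ‖(0 : Fin n → ℂ)‖ < r := by rw [norm_zero]; exact hrpos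
    have hV00 : Vmap 0 = 0 := by
      funext i
      have h := abs_eval_le (t := 0) hn (hcoeff i) (hdeg i) (hV0 i) (hV1 i) 0 le_rfl
        (fun j => by simp)
      have hzero : ∑ k ∈ Finset.Icc 2 d, (n:ℝ) ^ k * (0:ℝ) ^ k = 0 := by
        apply Finset.sum_eq_zero
        intro k hk
        have hk0 : k ≠ 0 := by
          have := (Finset.mem_Icc.1 hk).1
          omega
        rw [zero_pow hk0, mul_zero]
      rw [hzero, mul_zero] at h
      have habs0 : ‖MvPolynomial.eval (0 : Fin n → ℂ) (V i)‖ = 0 :=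
        le_antisymm h (norm_nonneg _)
      have := norm_eq_zero.1 habs0
      rw [hVmap]
      simpa using this
    have hz2 : ‖(0 : Fin n → ℂ)‖ ≤ ρ := by rw [norm_zero]; exact le_of_lt hρpos
    have heq0 : (0 : Fin n → ℂ) = 0 + Vmap 0 := by rw [hV00, add_zero]
    exact (hFuniq 0 h0r 0 hz2 heq0).symm
  · -- fixed point equation
    intro y hy
    have hy' : ‖y‖ < r := hy
    have h2 := hFeq y hy'
    refine h2.trans ?_
    funext i
    rw [hVmap]
    simp
end

section
/- Let n ≥ 1 and let V : Fin n → MvPolynomial (Fin n) ℂ be a polynomial map with V(0) = 0 and V'(0) = 0. Then there exists a unique family of formal power series F : Fin n → MvPowerSeries (Fin n) ℂ, each with zero constant coefficient, satisfying the fixed-point equation F i = X i + (V i substituted with F) for every i, where the substitution replaces the variable X j in V i by the power series F j. -/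
open MvPowerSeries Finset

namespace FormalFPAux

variable {n : ℕ}

/-- Total degree of a multi-index. -/
def Deg (d : Fin n →₀ ℕ) : ℕ := ∑ j, d j

lemma deg_add (u v : Fin n →₀ ℕ) : Deg (u + v) = Deg u + Deg v := by
  simp [Deg, Finset.sum_add_distrib]

lemma deg_eq_zero {d : Fin n →₀ ℕ} (h : Deg d = 0) : d = 0 := by
  ext j
  exact Finset.sum_eq_zero_iff.mp h j (mem_univ j)

lemma deg_zero : Deg (0 : Fin n →₀ ℕ) = 0 := by simp [Deg]

lemma two_le_deg {m : Fin n →₀ ℕ} (h0 : m ≠ 0) (h1 : ∀ j, m ≠ Finsupp.single j 1) :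
    2 ≤ Deg m := by
  have hne : Deg m ≠ 0 := fun h => h0 (deg_eq_zero h)
  have hne1 : Deg m ≠ 1 := by
    intro hd
    obtain ⟨j0, -, hj0⟩ : ∃ j ∈ (univ : Finset (Fin n)), m j ≠ 0 :=
      Finset.exists_ne_zero_of_sum_ne_zero (by rw [← Deg] at *; omega)
    have hsum : m j0 + ∑ j ∈ univ.erase j0, m j = 1 := by
      rw [Finset.add_sum_erase _ _ (mem_univ j0)]; exact hd
    have hmj0 : m j0 = 1 := by omega
    have hrest : ∑ j ∈ univ.erase j0, m j = 0 := by omega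
    apply h1 j0
    ext j
    rcases eq_or_ne j j0 with rfl | hj
    · simp [hmj0]
    · have : m j = 0 :=
        Finset.sum_eq_zero_iff.mp hrest j (Finset.mem_erase.mpr ⟨hj, mem_univ j⟩)
      simp [this, Finsupp.single_apply, (Ne.symm hj)]
  omega

lemma peel (G : Fin n → MvPowerSeries (Fin n) ℂ) (e : Fin n → ℕ) (j0 : Fin n)
    (h : e j0 ≠ 0) :
    ∏ j, G j ^ e j = G j0 * ∏ j, G j ^ (Function.update e j0 (e j0 - 1)) j := by
  rw [← Finset.mul_prod_erase univ (fun j => G j ^ e j) (mem_univ j0),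
    ← Finset.mul_prod_erase univ (fun j => G j ^ (Function.update e j0 (e j0 - 1)) j)
      (mem_univ j0)]
  obtain ⟨k, hk⟩ := Nat.exists_eq_succ_of_ne_zero h
  have h1 : Function.update e j0 (e j0 - 1) j0 = k := by simp [hk]
  have h2 : ∀ j ∈ univ.erase j0,
      G j ^ (Function.update e j0 (e j0 - 1)) j = G j ^ e j := by
    intro j hj
    rw [Function.update_of_ne (Finset.mem_erase.mp hj).1]
  rw [Finset.prod_congr rfl h2, h1, hk, pow_succ, mul_comm (G j0 ^ k) (G j0), mul_assoc]

lemma sum_update (e : Fin n → ℕ) (j0 : Fin n) (h : e j0 ≠ 0) :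
    ∑ j, (Function.update e j0 (e j0 - 1)) j = (∑ j, e j) - 1 := by
  have h1 : ∑ j, e j = e j0 + ∑ j ∈ univ.erase j0, e j :=
    (Finset.add_sum_erase _ e (mem_univ j0)).symm
  have h2 : ∑ j, (Function.update e j0 (e j0 - 1)) j
      = (e j0 - 1) + ∑ j ∈ univ.erase j0, e j := by
    rw [← Finset.add_sum_erase _ _ (mem_univ j0), Function.update_self]
    congr 1
    exact Finset.sum_congr rfl fun j hj => Function.update_of_ne (Finset.mem_erase.mp hj).1 _ _
  omega

/-- A product of `k` power series with zero constant coefficient has order ≥ `k`. -/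
lemma ordProd (G : Fin n → MvPowerSeries (Fin n) ℂ)
    (hG : ∀ i, MvPowerSeries.constantCoeff (G i) = 0) :
    ∀ (k : ℕ) (e : Fin n → ℕ), (∑ j, e j) = k → ∀ d : Fin n →₀ ℕ, Deg d < k →
      MvPowerSeries.coeff d (∏ j, G j ^ e j) = 0 := by
  intro k
  induction k with
  | zero => intro e he d hd; omega
  | succ k ih =>
    intro e he d hd
    obtain ⟨j0, -, hj0⟩ : ∃ j ∈ (univ : Finset (Fin n)), e j ≠ 0 :=
      Finset.exists_ne_zero_of_sum_ne_zero (by omega)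
    rw [peel G e j0 hj0, MvPowerSeries.coeff_mul]
    apply Finset.sum_eq_zero
    intro p hp
    have hpd : p.1 + p.2 = d := Finset.HasAntidiagonal.mem_antidiagonal.mp hp
    rcases eq_or_ne p.1 0 with h1 | h1
    · have : MvPowerSeries.coeff p.1 (G j0) = 0 := by
        rw [h1]
        rw [show ((MvPowerSeries.coeff (0 : Fin n →₀ ℕ)) (G j0))
          = MvPowerSeries.constantCoeff (G j0) from
            congrFun MvPowerSeries.coeff_zero_eq_constantCoeff (G j0)]
        exact hG j0
      rw [this, zero_mul]
    · have hdeg : Deg p.1 + Deg p.2 = Deg d := by rw [← deg_add, hpd]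
      have hp1 : Deg p.1 ≠ 0 := fun h => h1 (deg_eq_zero h)
      have hv : Deg p.2 < k := by omega
      rw [ih _ (sum_update e j0 hj0 ▸ by omega) p.2 hv, mul_zero]

/-- Gain lemma for products: a product of `k` factors, each pair agreeing below degree `N`,
agrees below degree `N + k - 1`. -/
lemma congrProd (N : ℕ) (G G' : Fin n → MvPowerSeries (Fin n) ℂ)
    (hG : ∀ i, MvPowerSeries.constantCoeff (G i) = 0)
    (hG' : ∀ i, MvPowerSeries.constantCoeff (G' i) = 0)
    (hc : ∀ i (d : Fin n →₀ ℕ), Deg d < N →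
      MvPowerSeries.coeff d (G i) = MvPowerSeries.coeff d (G' i)) :
    ∀ (k : ℕ) (e : Fin n → ℕ), (∑ j, e j) = k → ∀ d : Fin n →₀ ℕ, Deg d + 1 < N + k →
      MvPowerSeries.coeff d (∏ j, G j ^ e j) = MvPowerSeries.coeff d (∏ j, G' j ^ e j) := by
  intro k
  induction k with
  | zero =>
    intro e he d hd
    have : ∀ j ∈ (univ : Finset (Fin n)), e j = 0 := by
      intro j hj
      exact Finset.sum_eq_zero_iff.mp he j hj
    have hz : ∀ j ∈ (univ : Finset (Fin n)), G j ^ e j = 1 := fun j hj => by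
      rw [this j hj, pow_zero]
    have hz' : ∀ j ∈ (univ : Finset (Fin n)), G' j ^ e j = 1 := fun j hj => by
      rw [this j hj, pow_zero]
    rw [Finset.prod_eq_one hz, Finset.prod_eq_one hz']
  | succ k ih =>
    intro e he d hd
    obtain ⟨j0, -, hj0⟩ : ∃ j ∈ (univ : Finset (Fin n)), e j ≠ 0 :=
      Finset.exists_ne_zero_of_sum_ne_zero (by omega)
    have hsum : ∑ j, (Function.update e j0 (e j0 - 1)) j = k := by
      rw [sum_update e j0 hj0]; omega
    rw [peel G e j0 hj0, peel G' e j0 hj0, MvPowerSeries.coeff_mul, MvPowerSeries.coeff_mul]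
    apply Finset.sum_congr rfl
    intro p hp
    have hpd : p.1 + p.2 = d := Finset.HasAntidiagonal.mem_antidiagonal.mp hp
    have hdeg : Deg p.1 + Deg p.2 = Deg d := by rw [← deg_add, hpd]
    rcases eq_or_ne p.1 0 with h1 | h1
    · have e1 : MvPowerSeries.coeff p.1 (G j0) = 0 := by
        rw [h1, show ((MvPowerSeries.coeff (0 : Fin n →₀ ℕ)) (G j0))
          = MvPowerSeries.constantCoeff (G j0) from
            congrFun MvPowerSeries.coeff_zero_eq_constantCoeff (G j0)]
        exact hG j0
      have e2 : MvPowerSeries.coeff p.1 (G' j0) = 0 := by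
        rw [h1, show ((MvPowerSeries.coeff (0 : Fin n →₀ ℕ)) (G' j0))
          = MvPowerSeries.constantCoeff (G' j0) from
            congrFun MvPowerSeries.coeff_zero_eq_constantCoeff (G' j0)]
        exact hG' j0
      rw [e1, e2, zero_mul, zero_mul]
    · have hp1 : Deg p.1 ≠ 0 := fun h => h1 (deg_eq_zero h)
      rcases Nat.lt_or_ge (Deg p.1) N with hN | hN
      · rw [hc j0 p.1 hN, ih _ hsum p.2 (by omega)]
      · have hv : Deg p.2 < k := by omega
        rw [ordProd G hG k _ hsum p.2 hv, ordProd G' hG' k _ hsum p.2 hv,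
          mul_zero, mul_zero]

/-- Key contraction estimate: substituting families agreeing below degree `N` into a
polynomial with vanishing constant and linear parts yields series agreeing below `N + 1`. -/
lemma aevalGain (N : ℕ) (G G' : Fin n → MvPowerSeries (Fin n) ℂ)
    (hG : ∀ i, MvPowerSeries.constantCoeff (G i) = 0)
    (hG' : ∀ i, MvPowerSeries.constantCoeff (G' i) = 0)
    (hc : ∀ i (d : Fin n →₀ ℕ), Deg d < N →
      MvPowerSeries.coeff d (G i) = MvPowerSeries.coeff d (G' i))
    (p : MvPolynomial (Fin n) ℂ)
    (hp0 : MvPolynomial.coeff 0 p = 0)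
    (hp1 : ∀ j, MvPolynomial.coeff (Finsupp.single j 1) p = 0)
    (d : Fin n →₀ ℕ) (hd : Deg d ≤ N) :
    MvPowerSeries.coeff d (MvPolynomial.aeval G p)
      = MvPowerSeries.coeff d (MvPolynomial.aeval G' p) := by
  conv_lhs => rw [p.as_sum]
  conv_rhs => rw [p.as_sum]
  rw [map_sum, map_sum, map_sum, map_sum]
  apply Finset.sum_congr rfl
  intro m hm
  have hcm : MvPolynomial.coeff m p ≠ 0 := MvPolynomial.mem_support_iff.mp hm
  have hm0 : m ≠ 0 := fun h => hcm (h ▸ hp0)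
  have hm1 : ∀ j, m ≠ Finsupp.single j 1 := fun j h => hcm (h ▸ hp1 j)
  have h2 : 2 ≤ Deg m := two_le_deg hm0 hm1
  rw [MvPolynomial.aeval_monomial, MvPolynomial.aeval_monomial,
    Finsupp.prod_fintype _ _ (fun j => pow_zero _),
    Finsupp.prod_fintype _ _ (fun j => pow_zero _),
    ← Algebra.smul_def, ← Algebra.smul_def, map_smul, map_smul]
  congr 1
  exact congrProd N G G' hG hG' hc (Deg m) (fun j => m j) rfl d (by omega)

end FormalFPAux

open FormalFPAux

/-- **Existence and uniqueness of the formal inverse.** If `V(0) = 0` and `V'(0) = 0`, then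
there is a unique family `F` of formal power series with zero constant coefficient
satisfying the fixed-point equation `F i = X i + V i (F)`, where the substitution of the
family `F` into the polynomial `V i` is polynomial evaluation (`MvPolynomial.aeval`) in the
ring of formal power series, which agrees with power-series substitution since each `F j`
has zero constant coefficient. -/
theorem formal_fixed_point_exists_unique (n : ℕ) (hn : 1 ≤ n)
    (V : Fin n → MvPolynomial (Fin n) ℂ)
    (hV0 : ∀ i, MvPolynomial.coeff 0 (V i) = 0)
    (hV1 : ∀ i j, MvPolynomial.coeff (Finsupp.single j 1) (V i) = 0) :
    ∃! F : Fin n → MvPowerSeries (Fin n) ℂ,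
      (∀ i, MvPowerSeries.constantCoeff (F i) = 0) ∧
      (∀ i, F i = MvPowerSeries.X i + MvPolynomial.aeval F (V i)) := by
  classical
  set Φ : (Fin n → MvPowerSeries (Fin n) ℂ) → (Fin n → MvPowerSeries (Fin n) ℂ) :=
    fun G i => MvPowerSeries.X i + MvPolynomial.aeval G (V i) with hΦ
  -- Φ preserves zero constant coefficient
  have hconst : ∀ G, (∀ i, MvPowerSeries.constantCoeff (G i) = 0) →
      ∀ i, MvPowerSeries.constantCoeff (Φ G i) = 0 := by
    intro G hG i
    have h0 : MvPowerSeries.coeff (0 : Fin n →₀ ℕ) (MvPolynomial.aeval G (V i))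
        = MvPowerSeries.coeff (0 : Fin n →₀ ℕ)
          (MvPolynomial.aeval (fun _ => (0 : MvPowerSeries (Fin n) ℂ)) (V i)) := by
      apply aevalGain 0 G _ hG (fun _ => by simp) (fun _ d hd => by omega) (V i) (hV0 i)
        (hV1 i) 0 (le_of_eq deg_zero)
    have hz : (MvPolynomial.aeval (fun _ => (0 : MvPowerSeries (Fin n) ℂ))) (V i) = 0 := by
      rw [show (fun _ => (0 : MvPowerSeries (Fin n) ℂ))
        = (0 : Fin n → MvPowerSeries (Fin n) ℂ) from rfl, MvPolynomial.aeval_zero]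
      have : MvPolynomial.constantCoeff (V i) = 0 := hV0 i
      rw [this, map_zero]
    rw [hΦ]
    simp only [map_add, MvPowerSeries.constantCoeff_X, zero_add]
    rw [← congrFun MvPowerSeries.coeff_zero_eq_constantCoeff, h0, hz, map_zero]
  -- the contraction property
  have hgain : ∀ (N : ℕ) (G G' : Fin n → MvPowerSeries (Fin n) ℂ),
      (∀ i, MvPowerSeries.constantCoeff (G i) = 0) →
      (∀ i, MvPowerSeries.constantCoeff (G' i) = 0) →
      (∀ i (d : Fin n →₀ ℕ), Deg d < N →
        MvPowerSeries.coeff d (G i) = MvPowerSeries.coeff d (G' i)) →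
      ∀ i (d : Fin n →₀ ℕ), Deg d < N + 1 →
        MvPowerSeries.coeff d (Φ G i) = MvPowerSeries.coeff d (Φ G' i) := by
    intro N G G' hG hG' hc i d hd
    rw [hΦ]
    simp only [map_add]
    rw [aevalGain N G G' hG hG' hc (V i) (hV0 i) (hV1 i) d (by omega)]
  -- the iterates
  set Fk : ℕ → (Fin n → MvPowerSeries (Fin n) ℂ) := fun k => Φ^[k] (fun _ => 0) with hFk
  have hFk0 : ∀ k i, MvPowerSeries.constantCoeff (Fk k i) = 0 := by
    intro k
    induction k with
    | zero => intro i; simp [hFk]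
    | succ k ih =>
      intro i
      rw [hFk]
      simp only [Function.iterate_succ_apply']
      exact hconst _ ih i
  have hsucc : ∀ k, Fk (k + 1) = Φ (Fk k) := by
    intro k; rw [hFk]; simp [Function.iterate_succ_apply']
  have hstab : ∀ k i (d : Fin n →₀ ℕ), Deg d < k →
      MvPowerSeries.coeff d (Fk k i) = MvPowerSeries.coeff d (Fk (k + 1) i) := by
    intro k
    induction k with
    | zero => intro i d hd; omega
    | succ k ih =>
      intro i d hd
      have h := hgain k (Fk k) (Fk (k + 1)) (hFk0 k) (hFk0 (k + 1))
        (fun i d hd => ih i d hd) i d hd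
      rw [← hsucc (k + 1), ← hsucc k] at h
      exact h
  have hmono : ∀ (k k' : ℕ), k ≤ k' → ∀ i (d : Fin n →₀ ℕ), Deg d < k →
      MvPowerSeries.coeff d (Fk k i) = MvPowerSeries.coeff d (Fk k' i) := by
    intro k k' hkk'
    induction k' , hkk' using Nat.le_induction with
    | base => intro i d hd; rfl
    | succ k' hk ih =>
      intro i d hd
      rw [ih i d hd, hstab k' i d (by omega)]
  -- the limit
  set F : Fin n → MvPowerSeries (Fin n) ℂ :=
    fun i d => MvPowerSeries.coeff d (Fk (Deg d + 1) i) with hFdef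
  have hF : ∀ (k : ℕ) i (d : Fin n →₀ ℕ), Deg d < k →
      MvPowerSeries.coeff d (F i) = MvPowerSeries.coeff d (Fk k i) := by
    intro k i d hd
    have h1 : MvPowerSeries.coeff d (F i)
        = MvPowerSeries.coeff d (Fk (Deg d + 1) i) := rfl
    rw [h1]
    rcases le_total (Deg d + 1) k with h | h
    · exact hmono _ _ h i d (by omega)
    · exact (hmono _ _ h i d hd).symm
  have hFc : ∀ i, MvPowerSeries.constantCoeff (F i) = 0 := by
    intro i
    rw [← congrFun MvPowerSeries.coeff_zero_eq_constantCoeff,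
      hF 1 i 0 (by rw [deg_zero]; omega), congrFun MvPowerSeries.coeff_zero_eq_constantCoeff]
    exact hFk0 1 i
  have hFfix : ∀ i, F i = MvPowerSeries.X i + MvPolynomial.aeval F (V i) := by
    intro i
    apply MvPowerSeries.ext
    intro d
    set N : ℕ := Deg d + 1 with hN
    have hcong : ∀ i (e : Fin n →₀ ℕ), Deg e < N →
        MvPowerSeries.coeff e (F i) = MvPowerSeries.coeff e (Fk N i) :=
      fun i e he => hF N i e he
    have h1 : MvPowerSeries.coeff d (Φ F i) = MvPowerSeries.coeff d (Φ (Fk N) i) :=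
      hgain N F (Fk N) hFc (hFk0 N) hcong i d (by omega)
    have h2 : MvPowerSeries.coeff d (Φ (Fk N) i)
        = MvPowerSeries.coeff d (Fk (N + 1) i) := by rw [hsucc N]
    have h3 : MvPowerSeries.coeff d (F i) = MvPowerSeries.coeff d (Fk (N + 1) i) :=
      hF (N + 1) i d (by omega)
    rw [h3, ← h2, ← h1]
  refine ⟨F, ⟨hFc, hFfix⟩, ?_⟩
  rintro G ⟨hGc, hGfix⟩
  have key : ∀ (N : ℕ) i (d : Fin n →₀ ℕ), Deg d < N →
      MvPowerSeries.coeff d (G i) = MvPowerSeries.coeff d (F i) := by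
    intro N
    induction N with
    | zero => intro i d hd; omega
    | succ N ih =>
      intro i d hd
      have hG' : G i = Φ G i := hGfix i
      have hF' : F i = Φ F i := hFfix i
      rw [hG', hF']
      exact hgain N G F hGc hFc (fun i d hd => ih i d hd) i d hd
  funext i
  apply MvPowerSeries.ext
  intro d
  exact key (Deg d + 1) i d (by omega)
end

section
/- Let n ≥ 1 and let V : Fin n → MvPolynomial (Fin n) ℂ be a polynomial map of degree ≤ d with V(0) = 0 and V'(0) = 0, and let F : Fin n → MvPowerSeries (Fin n) ℂ be the unique family of power series with zero constant coefficient satisfying F i = X i + (V i substituted with F). Let ‖V‖ denote the maximum of the absolute values of all coefficients of the polynomials V i. Then for every i and every N ≥ 1, the sum over all exponent multi-indices m of total degree N of |coeff m (F i)| is at most ((2n)^d · (1 + ‖V‖))^(N-1). -/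
open Finset MvPowerSeries

namespace FIB

variable {n : ℕ}

/-- degree of a multi-index -/
def deg (μ : Fin n →₀ ℕ) : ℕ := ∑ j, μ j

/-- finset of multi-indices of degree N -/
noncomputable def DD (n N : ℕ) : Finset (Fin n →₀ ℕ) :=
  (Finset.Nat.antidiagonalTuple n N).map (Finsupp.equivFunOnFinite.symm.toEmbedding)

lemma mem_DD {N : ℕ} {μ : Fin n →₀ ℕ} : μ ∈ DD n N ↔ deg μ = N := by
  simp only [DD, Finset.mem_map, Equiv.coe_toEmbedding, Finset.Nat.mem_antidiagonalTuple]
  constructor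
  · rintro ⟨m, hm, rfl⟩
    simpa [deg] using hm
  · intro h
    exact ⟨Finsupp.equivFunOnFinite μ, by simpa [deg] using h, by simp⟩

lemma deg_add (μ ν : Fin n →₀ ℕ) : deg (μ + ν) = deg μ + deg ν := by
  simp [deg, Finset.sum_add_distrib]

lemma deg_single (j : Fin n) (k : ℕ) : deg (Finsupp.single j k) = k := by
  simp [deg, Finsupp.single_apply]

lemma deg_eq_zero {μ : Fin n →₀ ℕ} (h : deg μ = 0) : μ = 0 := by
  have := Finset.sum_eq_zero_iff.mp h
  ext j; exact this j (Finset.mem_univ j)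

lemma deg_eq_one {μ : Fin n →₀ ℕ} (h : deg μ = 1) : ∃ j, μ = Finsupp.single j 1 := by
  classical
  have hex : ∃ j, μ j ≠ 0 := by
    by_contra hc
    push_neg at hc
    simp [deg, hc] at h
  obtain ⟨j, hj⟩ := hex
  have hle : μ j ≤ 1 := h ▸ Finset.single_le_sum (f := fun j => μ j) (fun _ _ => Nat.zero_le _) (Finset.mem_univ j)
  have hj1 : μ j = 1 := le_antisymm hle (Nat.one_le_iff_ne_zero.mpr hj)
  refine ⟨j, ?_⟩
  ext j'
  rcases eq_or_ne j' j with rfl | hne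
  · simp [hj1]
  · have hrest : ∑ t ∈ Finset.univ.erase j, μ t = 0 := by
      have h2 := Finset.add_sum_erase Finset.univ μ (Finset.mem_univ j)
      simp only [deg] at h
      omega
    have := Finset.sum_eq_zero_iff.mp hrest j' (Finset.mem_erase.mpr ⟨hne, Finset.mem_univ _⟩)
    simp [Finsupp.single_apply, hne, this, Ne.symm hne]

/-- coefficient absolute-value sum in degree N -/
noncomputable def SS (G : MvPowerSeries (Fin n) ℂ) (N : ℕ) : ℝ :=
  ∑ μ ∈ DD n N, ‖MvPowerSeries.coeff μ G‖

lemma SS_nonneg (G : MvPowerSeries (Fin n) ℂ) (N : ℕ) : 0 ≤ SS G N :=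
  Finset.sum_nonneg fun _ _ => norm_nonneg _

lemma SS_add (G H : MvPowerSeries (Fin n) ℂ) (N : ℕ) : SS (G + H) N ≤ SS G N + SS H N := by
  simp only [SS]
  rw [← Finset.sum_add_distrib]
  exact Finset.sum_le_sum fun μ _ => by simpa using norm_add_le _ _

lemma SS_sum {α : Type*} (s : Finset α) (f : α → MvPowerSeries (Fin n) ℂ) (N : ℕ) :
    SS (∑ t ∈ s, f t) N ≤ ∑ t ∈ s, SS (f t) N := by
  classical
  induction s using Finset.induction with
  | empty => simp [SS]
  | insert _ _ h ih =>
      rw [Finset.sum_insert h, Finset.sum_insert h]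
      exact le_trans (SS_add _ _ _) (add_le_add_right ih _)


lemma SS_one (N : ℕ) : SS (1 : MvPowerSeries (Fin n) ℂ) N = if N = 0 then 1 else 0 := by
  classical
  rcases eq_or_ne N 0 with rfl | hN
  · have hD : DD n 0 = {0} := by
      ext μ; simp only [mem_DD, Finset.mem_singleton]
      constructor
      · exact deg_eq_zero
      · rintro rfl; simp [deg]
    simp [SS, hD, MvPowerSeries.coeff_one]
  · simp only [SS, if_neg hN]
    refine Finset.sum_eq_zero fun μ hμ => ?_
    have : μ ≠ 0 := by
      intro h; subst h
      exact hN (by simpa [deg] using (mem_DD.mp hμ).symm)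
    simp [MvPowerSeries.coeff_one, this]

lemma SS_X (i : Fin n) (N : ℕ) : SS (MvPowerSeries.X i : MvPowerSeries (Fin n) ℂ) N
    = if N = 1 then 1 else 0 := by
  classical
  simp only [SS, MvPowerSeries.coeff_X]
  rcases eq_or_ne N 1 with rfl | hN
  · rw [if_pos rfl]
    rw [Finset.sum_eq_single (Finsupp.single i 1)]
    · simp
    · intro μ _ hne; simp [hne]
    · intro h
      exact absurd (mem_DD.mpr (deg_single i 1)) h
  · rw [if_neg hN]
    refine Finset.sum_eq_zero fun μ hμ => ?_
    have : μ ≠ Finsupp.single i 1 := by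
      intro h
      rw [h] at hμ
      exact hN ((mem_DD.mp hμ).symm.trans (deg_single i 1))
    simp [this]

lemma SS_zero_of_const (G : MvPowerSeries (Fin n) ℂ)
    (h : MvPowerSeries.constantCoeff G = 0) : SS G 0 = 0 := by
  have hD : DD n 0 = {0} := by
    ext μ; simp only [mem_DD, Finset.mem_singleton]
    exact ⟨deg_eq_zero, by rintro rfl; simp [deg]⟩
  simp [SS, hD, MvPowerSeries.coeff_zero_eq_constantCoeff, h]

lemma SS_smul (c : ℂ) (G : MvPowerSeries (Fin n) ℂ) (N : ℕ) :
    SS (c • G) N = ‖c‖ * SS G N := by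
  simp [SS, Finset.mul_sum, norm_mul]

lemma SS_mul (G H : MvPowerSeries (Fin n) ℂ) (N : ℕ) :
    SS (G * H) N ≤ ∑ ab ∈ Finset.HasAntidiagonal.antidiagonal N, SS G ab.1 * SS H ab.2 := by
  classical
  have step1 : SS (G * H) N ≤
      ∑ μ ∈ DD n N, ∑ pq ∈ Finset.HasAntidiagonal.antidiagonal μ,
        ‖MvPowerSeries.coeff pq.1 G‖ * ‖MvPowerSeries.coeff pq.2 H‖ := by
    refine Finset.sum_le_sum fun μ _ => ?_
    rw [MvPowerSeries.coeff_mul]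
    exact le_trans (norm_sum_le _ _)
      (le_of_eq (Finset.sum_congr rfl fun pq _ => norm_mul _ _))
  refine le_trans step1 (le_of_eq ?_)
  have rhs1 : ∑ ab ∈ Finset.HasAntidiagonal.antidiagonal N, SS G ab.1 * SS H ab.2
      = ∑ ab ∈ Finset.HasAntidiagonal.antidiagonal N, ∑ pq ∈ DD n ab.1 ×ˢ DD n ab.2,
          ‖MvPowerSeries.coeff pq.1 G‖ * ‖MvPowerSeries.coeff pq.2 H‖ := by
    refine Finset.sum_congr rfl fun ab _ => ?_
    rw [SS, SS, Finset.sum_mul_sum, ← Finset.sum_product']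
  rw [rhs1, Finset.sum_sigma', Finset.sum_sigma']
  refine Finset.sum_nbij' (fun x => ⟨(deg x.2.1, deg x.2.2), x.2⟩)
    (fun x => ⟨x.2.1 + x.2.2, x.2⟩) ?_ ?_ ?_ ?_ ?_
  · rintro ⟨μ, p, q⟩ hx
    simp only [Finset.mem_sigma, mem_DD, Finset.HasAntidiagonal.mem_antidiagonal] at hx
    obtain ⟨h1, h2⟩ := hx
    simp only [Finset.mem_sigma, Finset.HasAntidiagonal.mem_antidiagonal, Finset.mem_product, mem_DD]
    exact ⟨by rw [← h1, ← h2, deg_add], trivial, trivial⟩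
  · rintro ⟨⟨a, b⟩, p, q⟩ hx
    simp only [Finset.mem_sigma, Finset.HasAntidiagonal.mem_antidiagonal, Finset.mem_product, mem_DD] at hx
    obtain ⟨h1, h2, h3⟩ := hx
    simp only [Finset.mem_sigma, mem_DD, Finset.HasAntidiagonal.mem_antidiagonal]
    exact ⟨by rw [deg_add, h2, h3, h1], trivial⟩
  · rintro ⟨μ, p, q⟩ hx
    simp only [Finset.mem_sigma, mem_DD, Finset.HasAntidiagonal.mem_antidiagonal] at hx
    simp [hx.2]
  · rintro ⟨⟨a, b⟩, p, q⟩ hx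
    simp only [Finset.mem_sigma, Finset.HasAntidiagonal.mem_antidiagonal, Finset.mem_product, mem_DD] at hx
    simp [hx.2.1, hx.2.2]
  · rintro ⟨μ, p, q⟩ _; rfl

/-- iterated convolution power: convPow u K is the K-fold convolution of u with δ₀ base -/
noncomputable def convPow (u : ℕ → ℝ) : ℕ → ℕ → ℝ
  | 0 => fun N => if N = 0 then 1 else 0
  | K + 1 => fun N => ∑ ab ∈ Finset.HasAntidiagonal.antidiagonal N, u ab.1 * convPow u K ab.2

lemma convPow_nonneg {u : ℕ → ℝ} (hu : ∀ N, 0 ≤ u N) (K N : ℕ) : 0 ≤ convPow u K N := by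
  induction K generalizing N with
  | zero => simp only [convPow]; positivity
  | succ K ih =>
      simp only [convPow]
      exact Finset.sum_nonneg fun ab _ => mul_nonneg (hu _) (ih _)

lemma convPow_one {u : ℕ → ℝ} (N : ℕ) : convPow u 1 N = u N := by
  simp only [convPow]
  rw [Finset.sum_eq_single (N, 0)]
  · simp
  · rintro ⟨a, b⟩ hab hne
    rw [Finset.HasAntidiagonal.mem_antidiagonal] at hab
    have : b ≠ 0 := by rintro rfl; exact hne (by simp [← hab])
    simp [this]
  · intro h
    exact absurd (Finset.HasAntidiagonal.mem_antidiagonal.mpr (by simp)) h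

lemma convPow_zero_of_lt {u : ℕ → ℝ} (hu0 : u 0 = 0) :
    ∀ K N, N < K → convPow u K N = 0 := by
  intro K
  induction K with
  | zero => intro N h; omega
  | succ K ih =>
      intro N h
      simp only [convPow]
      refine Finset.sum_eq_zero fun ab hab => ?_
      rw [Finset.HasAntidiagonal.mem_antidiagonal] at hab
      rcases Nat.eq_zero_or_pos ab.1 with h1 | h1
      · rw [h1] at hab ⊢; simp [hu0]
      · have : ab.2 < K := by omega
        rw [ih _ this, mul_zero]

lemma convPow_congr {u v : ℕ → ℝ} {M : ℕ} (h : ∀ m, m ≤ M → u m = v m) :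
    ∀ K N, N ≤ M → convPow u K N = convPow v K N := by
  intro K
  induction K with
  | zero => intro N _; rfl
  | succ K ih =>
      intro N hN
      simp only [convPow]
      refine Finset.sum_congr rfl fun ab hab => ?_
      rw [Finset.HasAntidiagonal.mem_antidiagonal] at hab
      rw [h ab.1 (by omega), ih ab.2 (by omega)]

/-- product bound -/
lemma SS_prod_le (F : Fin n → MvPowerSeries (Fin n) ℂ) (u : ℕ → ℝ)
    (hu : ∀ j N, SS (F j) N ≤ u N) (hu0 : ∀ N, 0 ≤ u N) :
    ∀ K (m : Fin n → ℕ), (∑ j, m j) = K → ∀ N,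
      SS (∏ j, F j ^ m j) N ≤ convPow u K N := by
  intro K
  induction K with
  | zero =>
      intro m hm N
      have hm0 : ∀ j, m j = 0 := by
        intro j
        exact Finset.sum_eq_zero_iff.mp hm j (Finset.mem_univ j)
      have : (∏ j, F j ^ m j) = 1 := by
        rw [Finset.prod_eq_one]
        intro j _; rw [hm0 j, pow_zero]
      rw [this, SS_one]
      simp only [convPow]
      split <;> norm_num
  | succ K ih =>
      intro m hm N
      have hex : ∃ j₀, m j₀ ≠ 0 := by
        by_contra hc
        push_neg at hc
        simp [hc] at hm
      obtain ⟨j₀, hj₀⟩ := hex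
      set m' : Fin n → ℕ := Function.update m j₀ (m j₀ - 1) with hm'
      have hsucc : m j₀ - 1 + 1 = m j₀ := by omega
      have h1 : (∏ j, F j ^ m j) = F j₀ ^ m j₀ * ∏ j ∈ Finset.univ.erase j₀, F j ^ m j :=
        (Finset.mul_prod_erase Finset.univ (fun j => F j ^ m j) (Finset.mem_univ j₀)).symm
      have h2 : (∏ j, F j ^ m' j)
          = F j₀ ^ (m j₀ - 1) * ∏ j ∈ Finset.univ.erase j₀, F j ^ m j := by
        rw [← Finset.mul_prod_erase Finset.univ (fun j => F j ^ m' j) (Finset.mem_univ j₀)]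
        congr 1
        · rw [hm', Function.update_self]
        · refine Finset.prod_congr rfl fun j hj => ?_
          rw [hm', Function.update_of_ne (Finset.mem_erase.mp hj).1]
      have hsplit : (∏ j, F j ^ m j) = F j₀ * ∏ j, F j ^ m' j := by
        rw [h1, h2, ← mul_assoc, ← pow_succ', hsucc]
      have hm'sum : (∑ j, m' j) = K := by
        have h3 : (∑ j, m' j) = (m j₀ - 1) + ∑ x ∈ Finset.univ \ {j₀}, m x := by
          rw [hm']
          exact Finset.sum_update_of_mem (Finset.mem_univ j₀) m (m j₀ - 1)
        have h4 := Finset.add_sum_erase Finset.univ m (Finset.mem_univ j₀)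
        rw [← Finset.erase_eq] at h3
        omega
      rw [hsplit]
      refine le_trans (SS_mul _ _ _) ?_
      simp only [convPow]
      refine Finset.sum_le_sum fun ab _ => ?_
      exact mul_le_mul (hu j₀ ab.1) (ih m' hm'sum ab.2) (SS_nonneg _ _) (hu0 _)

lemma catalan_le_four_pow (m : ℕ) : catalan m ≤ 4 ^ m := by
  have h1 : catalan m ≤ m.centralBinom := by
    have := succ_mul_catalan_eq_centralBinom m
    nlinarith [catalan m, this]
  have h2 : m.centralBinom ≤ 2 ^ (2 * m) := by
    rw [Nat.centralBinom, ← Nat.sum_range_choose (2 * m)]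
    exact Finset.single_le_sum (f := fun i => (2 * m).choose i) (fun _ _ => Nat.zero_le _)
      (Finset.mem_range.mpr (by omega))
  calc catalan m ≤ 2 ^ (2 * m) := le_trans h1 h2
    _ = 4 ^ m := by rw [pow_mul]; norm_num

lemma catalan_conv {N : ℕ} (hN : 2 ≤ N) :
    ∑ ab ∈ (Finset.HasAntidiagonal.antidiagonal N).filter (fun ab => 1 ≤ ab.1 ∧ 1 ≤ ab.2),
      catalan (ab.1 - 1) * catalan (ab.2 - 1) = catalan (N - 1) := by
  have hN1 : N - 1 = (N - 2) + 1 := by omega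
  rw [hN1, catalan_succ']
  refine Finset.sum_nbij' (fun ab => (ab.1 - 1, ab.2 - 1)) (fun ab => (ab.1 + 1, ab.2 + 1))
    ?_ ?_ ?_ ?_ ?_
  · rintro ⟨a, b⟩ hab
    simp only [Finset.mem_filter, Finset.HasAntidiagonal.mem_antidiagonal] at hab ⊢
    omega
  · rintro ⟨a, b⟩ hab
    simp only [Finset.mem_filter, Finset.HasAntidiagonal.mem_antidiagonal] at hab ⊢
    omega
  · rintro ⟨a, b⟩ hab
    simp only [Finset.mem_filter, Finset.HasAntidiagonal.mem_antidiagonal] at hab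
    simp only [Prod.mk.injEq]
    omega
  · rintro ⟨a, b⟩ _
    simp
  · rintro ⟨a, b⟩ _
    rfl

/-- the majorant sequence -/
noncomputable def gseq (x : ℝ) (N : ℕ) : ℝ :=
  if N = 0 then 0 else (catalan (N - 1) : ℝ) * x ^ (N - 1)

lemma gseq_nonneg {x : ℝ} (hx : 0 ≤ x) (N : ℕ) : 0 ≤ gseq x N := by
  unfold gseq; split
  · exact le_refl 0
  · positivity

lemma convPow_gseq_le {x : ℝ} (hx : 0 ≤ x) :
    ∀ K, 1 ≤ K → ∀ N, K ≤ N → convPow (gseq x) K N ≤ (catalan (N - 1) : ℝ) * x ^ (N - K) := by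
  intro K
  induction K with
  | zero => omega
  | succ K ih =>
      intro _ N hKN
      rcases Nat.eq_zero_or_pos K with rfl | hK
      · rw [convPow_one, gseq, if_neg (by omega)]
      · have hN2 : 2 ≤ N := by omega
        show convPow (gseq x) (K + 1) N ≤ _
        have hconv : convPow (gseq x) (K + 1) N
            = ∑ ab ∈ Finset.HasAntidiagonal.antidiagonal N, gseq x ab.1 * convPow (gseq x) K ab.2 := rfl
        rw [hconv]
        have hterm : ∀ ab ∈ Finset.HasAntidiagonal.antidiagonal N,
            gseq x ab.1 * convPow (gseq x) K ab.2 ≤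
              (if 1 ≤ ab.1 ∧ 1 ≤ ab.2 then
                ((catalan (ab.1 - 1) : ℝ) * (catalan (ab.2 - 1) : ℝ)) * x ^ (N - (K + 1))
               else 0) := by
          rintro ⟨a, b⟩ hab
          rw [Finset.HasAntidiagonal.mem_antidiagonal] at hab
          rcases Nat.eq_zero_or_pos a with rfl | ha
          · simp [gseq]
          rcases Nat.eq_zero_or_pos b with rfl | hb
          · rw [convPow_zero_of_lt (by simp [gseq]) K 0 hK, mul_zero]
            split
            · positivity
            · exact le_refl 0
          rw [if_pos ⟨ha, hb⟩]
          rcases lt_or_ge b K with hbK | hbK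
          · rw [convPow_zero_of_lt (by simp [gseq]) K b hbK, mul_zero]
            positivity
          · have hga : gseq x a = (catalan (a - 1) : ℝ) * x ^ (a - 1) := by
              rw [gseq, if_neg (by omega)]
            have hcb := ih hK b hbK
            calc gseq x a * convPow (gseq x) K b
                ≤ ((catalan (a - 1) : ℝ) * x ^ (a - 1)) *
                  ((catalan (b - 1) : ℝ) * x ^ (b - K)) := by
                  refine mul_le_mul (le_of_eq hga) hcb
                    (convPow_nonneg (gseq_nonneg hx) _ _) (by positivity)
              _ = ((catalan (a - 1) : ℝ) * (catalan (b - 1) : ℝ)) * x ^ (N - (K + 1)) := by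
                  rw [mul_mul_mul_comm, ← pow_add,
                    show (a - 1) + (b - K) = N - (K + 1) by omega]
        refine le_trans (Finset.sum_le_sum hterm) ?_
        rw [Finset.sum_ite, Finset.sum_const_zero, add_zero, ← Finset.sum_mul]
        refine le_of_eq (congrArg (· * x ^ (N - (K + 1))) ?_)
        rw [← catalan_conv hN2]
        push_cast
        rfl

lemma card_DD_le (k : ℕ) : (DD n k).card ≤ n ^ k := by
  classical
  have hsurj : ∀ (k : ℕ) (μ : Fin n →₀ ℕ), deg μ = k →
      ∃ f : Fin k → Fin n, (∑ t, Finsupp.single (f t) 1) = μ := by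
    intro k
    induction k with
    | zero =>
        intro μ hμ
        exact ⟨Fin.elim0, by simp [deg_eq_zero hμ]⟩
    | succ k ih =>
        intro μ hμ
        have hex : ∃ j, μ j ≠ 0 := by
          by_contra hc
          push_neg at hc
          have : μ = 0 := by ext j; exact hc j
          rw [this] at hμ
          simp [deg] at hμ
        obtain ⟨j, hj⟩ := hex
        have hle : Finsupp.single j 1 ≤ μ := by
          rw [Finsupp.single_le_iff]; omega
        have hdecomp : Finsupp.single j 1 + (μ - Finsupp.single j 1) = μ :=
          add_tsub_cancel_of_le hle
        have hdeg' : deg (μ - Finsupp.single j 1) = k := by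
          have := deg_add (Finsupp.single j 1) (μ - Finsupp.single j 1)
          rw [hdecomp, deg_single] at this
          omega
        obtain ⟨f', hf'⟩ := ih _ hdeg'
        refine ⟨Fin.cons j f', ?_⟩
        simp only [Fin.sum_univ_succ, Fin.cons_zero, Fin.cons_succ]
        rw [hf', hdecomp]
  set e : (Fin k → Fin n) → (Fin n →₀ ℕ) := fun f => ∑ t, Finsupp.single (f t) 1 with he
  have hsub : DD n k ⊆ Finset.image e Finset.univ := by
    intro μ hμ
    obtain ⟨f, hf⟩ := hsurj k μ (mem_DD.mp hμ)
    exact Finset.mem_image.mpr ⟨f, Finset.mem_univ f, hf⟩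
  calc (DD n k).card ≤ (Finset.image e Finset.univ).card := Finset.card_le_card hsub
    _ ≤ (Finset.univ : Finset (Fin k → Fin n)).card := Finset.card_image_le
    _ = n ^ k := by simp

lemma telescope {v : ℝ} (hv : 0 ≤ v) (d : ℕ) :
    ∑ k ∈ Finset.Icc 2 d, v * (1 + v) ^ (d - k) ≤ (1 + v) ^ (d - 1) := by
  rcases Nat.lt_or_ge d 2 with hd | hd
  · rw [Finset.Icc_eq_empty (by omega)]
    simp only [Finset.sum_empty]
    positivity
  · have main : ∀ m, 1 ≤ m → ∑ k ∈ Finset.Icc 2 m, v * (1 + v) ^ (m - k)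
        = (1 + v) ^ (m - 1) - 1 := by
      intro m hm
      induction m with
      | zero => omega
      | succ m ihm =>
          rcases Nat.lt_or_ge m 1 with hm1 | hm1
          · interval_cases m
            simp
          · have hins : Finset.Icc 2 (m + 1) = insert (m + 1) (Finset.Icc 2 m) :=
              (Finset.insert_Icc_right_eq_Icc_add_one (by omega)).symm
            rw [hins, Finset.sum_insert (by simp), Nat.sub_self, pow_zero, mul_one]
            have hshift : ∀ k ∈ Finset.Icc 2 m, v * (1 + v) ^ (m + 1 - k)
                = (1 + v) * (v * (1 + v) ^ (m - k)) := by
              intro k hk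
              rw [Finset.mem_Icc] at hk
              rw [show m + 1 - k = (m - k) + 1 by omega, pow_succ]
              ring
            rw [Finset.sum_congr rfl hshift, ← Finset.mul_sum, ihm hm1,
              show m + 1 - 1 = m by omega,
              show (1 + v) ^ m = (1+v)^(m-1) * (1+v) by rw [← pow_succ]; congr 1; omega]
            ring
    rw [main d (by omega)]
    have : (0:ℝ) ≤ (1 + v) ^ (d - 1) := by positivity
    linarith

section coeffNormFacts
variable (V : Fin n → MvPolynomial (Fin n) ℂ)

lemma coeffNorm_bdd : BddAbove {r : ℝ | ∃ (i : Fin n) (m : Fin n →₀ ℕ),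
    r = ‖MvPolynomial.coeff m (V i)‖} := by
  classical
  refine ⟨∑ i, ∑ m ∈ (V i).support, ‖MvPolynomial.coeff m (V i)‖, ?_⟩
  rintro r ⟨i, m, rfl⟩
  have h1 : ‖MvPolynomial.coeff m (V i)‖
      ≤ ∑ m' ∈ (V i).support, ‖MvPolynomial.coeff m' (V i)‖ := by
    by_cases hm : m ∈ (V i).support
    · exact Finset.single_le_sum (f := fun m' => ‖MvPolynomial.coeff m' (V i)‖)
        (fun _ _ => norm_nonneg _) hm
    · rw [MvPolynomial.notMem_support_iff.mp hm]
      simp only [norm_zero]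
      exact Finset.sum_nonneg fun _ _ => norm_nonneg _
  refine le_trans h1 ?_
  exact Finset.single_le_sum
    (f := fun i => ∑ m' ∈ (V i).support, ‖MvPolynomial.coeff m' (V i)‖)
    (fun _ _ => Finset.sum_nonneg fun _ _ => norm_nonneg _) (Finset.mem_univ i)

lemma abs_coeff_le_coeffNorm (i : Fin n) (m : Fin n →₀ ℕ) :
    ‖MvPolynomial.coeff m (V i)‖ ≤ coeffNorm V :=
  le_csSup (coeffNorm_bdd V) ⟨i, m, rfl⟩

lemma coeffNorm_nonneg (hn : 1 ≤ n) : 0 ≤ coeffNorm V := by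
  have i0 : Fin n := ⟨0, hn⟩
  exact le_trans (norm_nonneg _) (abs_coeff_le_coeffNorm V i0 0)
end coeffNormFacts

end FIB

open FIB in
set_option maxHeartbeats 1000000 in
/-- **Coefficient bounds for the formal inverse.** If `F` is the family of formal power
series with zero constant coefficient solving `F i = X i + V i (F)` (substitution being
polynomial evaluation in the power series ring, which agrees with power-series
substitution since each `F j` has zero constant coefficient), then for every `i` and every
`N ≥ 1`, the sum over all multi-indices `m` of total degree `N` of `|coeff m (F i)|` is at
most `((2n)^d (1 + ‖V‖))^(N-1)`. -/
theorem formal_inverse_coeff_bound (n d : ℕ) (hn : 1 ≤ n)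
    (V : Fin n → MvPolynomial (Fin n) ℂ)
    (hdeg : ∀ i, (V i).totalDegree ≤ d)
    (hV0 : ∀ i, MvPolynomial.coeff 0 (V i) = 0)
    (hV1 : ∀ i j, MvPolynomial.coeff (Finsupp.single j 1) (V i) = 0)
    (F : Fin n → MvPowerSeries (Fin n) ℂ)
    (hF0 : ∀ i, MvPowerSeries.constantCoeff (F i) = 0)
    (hF : ∀ i, F i = MvPowerSeries.X i + MvPolynomial.aeval F (V i)) :
    ∀ (i : Fin n) (N : ℕ), 1 ≤ N →
      ∑ m ∈ Finset.Nat.antidiagonalTuple n N,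
          ‖MvPowerSeries.coeff (Finsupp.equivFunOnFinite.symm m) (F i)‖
        ≤ ((2 * n) ^ d * (1 + coeffNorm V)) ^ (N - 1) := by
  classical
  set v : ℝ := coeffNorm V with hv
  have hv0 : 0 ≤ v := coeffNorm_nonneg V hn
  set C : ℝ := (2 * n) ^ d * (1 + v) with hC
  have hC0 : 0 ≤ C := by positivity
  set x : ℝ := C / 4 with hx
  have hx0 : 0 ≤ x := by positivity
  have hn1 : (1:ℝ) ≤ (n:ℝ) := by exact_mod_cast hn
  -- degree facts about support of V i
  have hsupp : ∀ i μ, μ ∈ (V i).support → 2 ≤ deg μ ∧ deg μ ≤ d := by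
    intro i μ hμ
    have hne : MvPolynomial.coeff μ (V i) ≠ 0 := MvPolynomial.mem_support_iff.mp hμ
    have hled : deg μ ≤ d := by
      have h1 := MvPolynomial.le_totalDegree hμ
      have h2 : μ.sum (fun _ e => e) = deg μ := Finsupp.sum_fintype _ _ (fun _ => rfl)
      rw [h2] at h1
      exact le_trans h1 (hdeg i)
    refine ⟨?_, hled⟩
    by_contra hlt
    push_neg at hlt
    interval_cases hdm : (deg μ)
    · exact hne (by rw [deg_eq_zero hdm]; exact hV0 i)
    · obtain ⟨j, rfl⟩ := deg_eq_one hdm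
      exact hne (hV1 i j)
  -- main induction
  have key : ∀ N, 1 ≤ N → ∀ i, SS (F i) N ≤ gseq x N := by
    intro N
    induction N using Nat.strong_induction_on with
    | _ N IH =>
      intro hN1 i
      -- the comparison sequence
      set u : ℕ → ℝ := fun M =>
        if M = 0 then 0 else if M < N then gseq x M else ∑ j, SS (F j) M with hu
      have hu0 : ∀ M, 0 ≤ u M := by
        intro M
        rw [hu]
        dsimp only
        split
        · exact le_refl 0
        split
        · exact gseq_nonneg hx0 M
        · exact Finset.sum_nonneg fun _ _ => SS_nonneg _ _
      have huF : ∀ j M, SS (F j) M ≤ u M := by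
        intro j M
        rw [hu]
        dsimp only
        split
        · rename_i h; rw [h, SS_zero_of_const _ (hF0 j)]
        split
        · rename_i h1 h2
          exact IH M h2 (by omega) j
        · exact Finset.single_le_sum (f := fun j => SS (F j) M)
            (fun _ _ => SS_nonneg _ _) (Finset.mem_univ j)
      have huzero : u 0 = 0 := by simp [hu]
      have hugseq : ∀ m, m ≤ N - 1 → u m = gseq x m := by
        intro m hm
        rw [hu]
        dsimp only
        split
        · rename_i h; rw [h, gseq]; simp
        · rw [if_pos (by omega)]
      -- convPow u agrees with convPow gseq at N for K ≥ 2
      have hcongrN : ∀ K, 1 ≤ K → convPow u (K + 1) N = convPow (gseq x) (K + 1) N := by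
        intro K hK
        show (∑ ab ∈ Finset.HasAntidiagonal.antidiagonal N, u ab.1 * convPow u K ab.2)
          = ∑ ab ∈ Finset.HasAntidiagonal.antidiagonal N, gseq x ab.1 * convPow (gseq x) K ab.2
        refine Finset.sum_congr rfl fun ab hab => ?_
        rw [Finset.HasAntidiagonal.mem_antidiagonal] at hab
        rcases Nat.eq_zero_or_pos ab.1 with h1 | h1
        · rw [h1, huzero, gseq, if_pos rfl, zero_mul, zero_mul]
        rcases Nat.eq_zero_or_pos ab.2 with h2 | h2
        · rw [h2, convPow_zero_of_lt huzero K 0 hK,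
            convPow_zero_of_lt (by rw [gseq]; simp) K 0 hK, mul_zero, mul_zero]
        · rw [hugseq ab.1 (by omega), convPow_congr hugseq K ab.2 (by omega)]
      -- expansion of the evaluation
      have hexp : (MvPolynomial.aeval F) (V i) = ∑ μ ∈ (V i).support,
          (algebraMap ℂ (MvPowerSeries (Fin n) ℂ)) (MvPolynomial.coeff μ (V i))
            * ∏ j, F j ^ μ j := by
        rw [MvPolynomial.aeval_def, MvPolynomial.eval₂_eq']
      -- the per-degree bound
      set B : ℕ → ℝ := fun k =>
        if k ≤ N then (catalan (N - 1) : ℝ) * x ^ (N - k) else 0 with hBdef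
      have hB0 : ∀ k, 0 ≤ B k := by
        intro k
        rw [hBdef]
        dsimp only
        split
        · positivity
        · exact le_refl 0
      have hterm : ∀ μ ∈ (V i).support,
          SS ((algebraMap ℂ (MvPowerSeries (Fin n) ℂ)) (MvPolynomial.coeff μ (V i))
            * ∏ j, F j ^ μ j) N ≤ v * B (deg μ) := by
        intro μ hμ
        obtain ⟨hk2, hkd⟩ := hsupp i μ hμ
        rw [← Algebra.smul_def, SS_smul]
        have hP : SS (∏ j, F j ^ μ j) N ≤ convPow u (deg μ) N :=
          SS_prod_le F u huF hu0 (deg μ) (fun j => μ j) rfl N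
        have hPB : convPow u (deg μ) N ≤ B (deg μ) := by
          obtain ⟨K, hK⟩ : ∃ K, deg μ = K + 1 := ⟨deg μ - 1, by omega⟩
          have hK1 : 1 ≤ K := by omega
          rcases le_or_gt (deg μ) N with hle | hlt
          · rw [hK, hcongrN K hK1, hBdef]
            dsimp only
            rw [if_pos (by omega), ← hK]
            exact convPow_gseq_le hx0 (deg μ) (by omega) N hle
          · rw [convPow_zero_of_lt huzero (deg μ) N hlt, hBdef]
            dsimp only
            rw [if_neg (by omega)]
        exact mul_le_mul (abs_coeff_le_coeffNorm V i μ)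
          (le_trans hP hPB) (SS_nonneg _ _) hv0
      -- putting it together
      have hstep : SS (F i) N ≤ (if N = 1 then (1:ℝ) else 0)
          + ∑ μ ∈ (V i).support, v * B (deg μ) := by
        calc SS (F i) N
            ≤ SS (MvPowerSeries.X i : MvPowerSeries (Fin n) ℂ) N
              + SS ((MvPolynomial.aeval F) (V i)) N := by
              rw [hF i]; exact SS_add _ _ _
          _ ≤ _ := by
              rw [SS_X]
              refine add_le_add_right ?_ _
              rw [hexp]
              exact le_trans (SS_sum _ _ _) (Finset.sum_le_sum hterm)
      -- grouping by degree
      have hgroup : ∑ μ ∈ (V i).support, v * B (deg μ)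
          ≤ ∑ k ∈ Finset.Icc 2 d, (n:ℝ) ^ k * (v * B k) := by
        rw [← Finset.sum_fiberwise_of_maps_to
          (g := deg) (t := Finset.Icc 2 d)
          (fun μ hμ => Finset.mem_Icc.mpr ⟨(hsupp i μ hμ).1, (hsupp i μ hμ).2⟩)
          (fun μ => v * B (deg μ))]
        refine Finset.sum_le_sum fun k _ => ?_
        have hinner : ∑ μ ∈ (V i).support.filter (fun μ => deg μ = k), v * B (deg μ)
            = ((V i).support.filter (fun μ => deg μ = k)).card * (v * B k) := by
          rw [Finset.sum_congr rfl (fun μ hμ => by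
            rw [(Finset.mem_filter.mp hμ).2]), Finset.sum_const, nsmul_eq_mul]
        rw [hinner]
        have hcard : (((V i).support.filter (fun μ => deg μ = k)).card : ℝ) ≤ (n:ℝ) ^ k := by
          have hsub : (V i).support.filter (fun μ => deg μ = k) ⊆ DD n k :=
            fun μ hμ => mem_DD.mpr (Finset.mem_filter.mp hμ).2
          have := le_trans (Finset.card_le_card hsub) (card_DD_le k)
          exact_mod_cast this
        exact mul_le_mul_of_nonneg_right hcard (mul_nonneg hv0 (hB0 k))
      -- final numeric estimate
      rcases eq_or_lt_of_le hN1 with hN1' | hN2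
      · -- N = 1
        have hT : ∑ k ∈ Finset.Icc 2 d, (n:ℝ) ^ k * (v * B k) = 0 := by
          refine Finset.sum_eq_zero fun k hk => ?_
          rw [Finset.mem_Icc] at hk
          rw [hBdef]
          dsimp only
          rw [if_neg (by omega), mul_zero, mul_zero]
        have hg1 : gseq x N = 1 := by
          rw [gseq, if_neg (by omega), ← hN1']
          norm_num
        rw [hg1]
        refine le_trans hstep ?_
        rw [if_pos hN1'.symm]
        linarith [le_trans hgroup (le_of_eq hT)]
      · -- N ≥ 2
        have hSX : SS (MvPowerSeries.X i : MvPowerSeries (Fin n) ℂ) N = 0 := by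
          rw [SS_X, if_neg (by omega)]
        have honepv : (0:ℝ) < 1 + v := by linarith
        have hpvpow : (0:ℝ) < (1 + v) ^ (d - 1) := by positivity
        -- the crucial per-k inequality
        have hperk : ∀ k ∈ Finset.Icc 2 d,
            ((n:ℝ) ^ k * (v * B k)) * (1 + v) ^ (d - 1)
              ≤ ((catalan (N - 1) : ℝ) * x ^ (N - 1)) * (v * (1 + v) ^ (d - k)) := by
          intro k hk
          rw [Finset.mem_Icc] at hk
          obtain ⟨hk2, hkd⟩ := hk
          rcases le_or_gt k N with hkN | hkN
          · -- main case
            have hd2 : 2 ≤ d := le_trans hk2 hkd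
            have hxsq : (n:ℝ) ^ 2 * (1 + v) ≤ x := by
              have h2n : (1:ℝ) ≤ 2 * n := by linarith
              have h4 : ((2:ℝ) * n) ^ 2 ≤ (2 * n) ^ d := pow_le_pow_right₀ h2n hd2
              have : (4:ℝ) * ((n:ℝ) ^ 2 * (1 + v)) ≤ C := by
                rw [hC]
                calc (4:ℝ) * ((n:ℝ)^2 * (1+v)) = ((2:ℝ)*n)^2 * (1+v) := by ring
                  _ ≤ (2*n)^d * (1+v) := mul_le_mul_of_nonneg_right h4 (by linarith)
              rw [hx, le_div_iff₀ (by norm_num : (0:ℝ) < 4)]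
              linarith
            have hxk : (n:ℝ) ^ k * (1 + v) ^ (k - 1) ≤ x ^ (k - 1) := by
              calc (n:ℝ) ^ k * (1 + v) ^ (k - 1)
                  ≤ (n:ℝ) ^ (2 * (k - 1)) * (1 + v) ^ (k - 1) := by
                    refine mul_le_mul_of_nonneg_right
                      (pow_le_pow_right₀ hn1 (by omega)) (by positivity)
                _ = ((n:ℝ) ^ 2 * (1 + v)) ^ (k - 1) := by
                    rw [mul_pow, ← pow_mul]
                _ ≤ x ^ (k - 1) := pow_le_pow_left₀ (by positivity) hxsq _
            have hBk : B k = (catalan (N - 1) : ℝ) * x ^ (N - k) := by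
              rw [hBdef]; dsimp only; rw [if_pos hkN]
            rw [hBk,
              show (1 + v) ^ (d - 1) = (1 + v) ^ (d - k) * (1 + v) ^ (k - 1) from by
                rw [← pow_add]; congr 1; omega,
              show x ^ (N - 1) = x ^ (N - k) * x ^ (k - 1) from by
                rw [← pow_add]; congr 1; omega]
            have hA : (0:ℝ) ≤ v * (catalan (N - 1) : ℝ) * x ^ (N - k) * (1 + v) ^ (d - k) := by
              positivity
            calc (n:ℝ) ^ k * (v * ((catalan (N - 1) : ℝ) * x ^ (N - k)))
                  * ((1 + v) ^ (d - k) * (1 + v) ^ (k - 1))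
                = (v * (catalan (N - 1) : ℝ) * x ^ (N - k) * (1 + v) ^ (d - k))
                  * ((n:ℝ) ^ k * (1 + v) ^ (k - 1)) := by ring
              _ ≤ (v * (catalan (N - 1) : ℝ) * x ^ (N - k) * (1 + v) ^ (d - k))
                  * x ^ (k - 1) := mul_le_mul_of_nonneg_left hxk hA
              _ = (catalan (N - 1) : ℝ) * (x ^ (N - k) * x ^ (k - 1))
                  * (v * (1 + v) ^ (d - k)) := by ring
          · -- k > N : B k = 0
            have hBk : B k = 0 := by
              rw [hBdef]; dsimp only; rw [if_neg (by omega)]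
            rw [hBk, mul_zero, mul_zero, zero_mul]
            positivity
        -- sum the per-k inequalities
        have hsum2 : (∑ k ∈ Finset.Icc 2 d, (n:ℝ) ^ k * (v * B k)) * (1 + v) ^ (d - 1)
            ≤ ((catalan (N - 1) : ℝ) * x ^ (N - 1)) * (1 + v) ^ (d - 1) := by
          rw [Finset.sum_mul]
          refine le_trans (Finset.sum_le_sum hperk) ?_
          rw [← Finset.mul_sum]
          refine mul_le_mul_of_nonneg_left (telescope hv0 d) (by positivity)
        have hsum3 : ∑ k ∈ Finset.Icc 2 d, (n:ℝ) ^ k * (v * B k)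
            ≤ (catalan (N - 1) : ℝ) * x ^ (N - 1) :=
          le_of_mul_le_mul_right (by linarith [hsum2]) hpvpow
        rw [gseq, if_neg (by omega)]
        calc SS (F i) N ≤ (if N = 1 then (1:ℝ) else 0)
              + ∑ μ ∈ (V i).support, v * B (deg μ) := hstep
          _ = ∑ μ ∈ (V i).support, v * B (deg μ) := by rw [if_neg (by omega), zero_add]
          _ ≤ ∑ k ∈ Finset.Icc 2 d, (n:ℝ) ^ k * (v * B k) := hgroup
          _ ≤ (catalan (N - 1) : ℝ) * x ^ (N - 1) := hsum3

  -- conclude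
  intro i N hN1
  have h1 : ∑ m ∈ Finset.Nat.antidiagonalTuple n N,
      ‖MvPowerSeries.coeff (Finsupp.equivFunOnFinite.symm m) (F i)‖
      = SS (F i) N := by
    rw [SS, DD, Finset.sum_map]
    rfl
  rw [h1]
  refine le_trans (key N hN1 i) ?_
  rw [gseq, if_neg (by omega)]
  have hcat : (catalan (N-1) : ℝ) ≤ 4 ^ (N-1) := by
    exact_mod_cast catalan_le_four_pow (N-1)
  calc (catalan (N-1) : ℝ) * x ^ (N-1) ≤ 4 ^ (N-1) * x ^ (N-1) :=
        mul_le_mul_of_nonneg_right hcat (by positivity)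
    _ = (4 * x) ^ (N-1) := by rw [mul_pow]
    _ = C ^ (N-1) := by rw [hx, mul_div_cancel₀ _ (by norm_num : (4:ℝ) ≠ 0)]
end

section
/- Let n ≥ 1 and let l be a finite list with values in Fin n such that between any two equal entries there is a strictly smaller entry: whenever i < j are positions with l(i) = l(j), there exists a position k with i < k < j and l(k) < l(i). Then the length of l is at most 2^n - 1. -/
/-- The separation property for lists of naturals. -/
def SepL (l : List ℕ) : Prop :=
  ∀ i j : ℕ, ∀ _hi : i < l.length, ∀ hj : j < l.length, i < j → l[i] = l[j] →
    ∃ k : ℕ, ∃ _hk : k < l.length, i < k ∧ k < j ∧ l[k] < l[i]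

lemma sepL_take (l : List ℕ) (m : ℕ) (h : SepL l) : SepL (l.take m) := by
  intro i j hi hj hij heq
  have hj' : j < l.length := lt_of_lt_of_le hj (by simp [List.length_take])
  have hi' : i < l.length := lt_trans hij hj'
  rw [List.getElem_take, List.getElem_take] at heq
  obtain ⟨k, hk, hik, hkj, hlt⟩ := h i j hi' hj' hij heq
  have hk' : k < (l.take m).length := by
    simp only [List.length_take] at hj ⊢
    omega
  exact ⟨k, hk', hik, hkj, by rw [List.getElem_take, List.getElem_take]; exact hlt⟩

lemma sepL_drop (l : List ℕ) (m : ℕ) (h : SepL l) : SepL (l.drop m) := by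
  intro i j hi hj hij heq
  have hj' : m + j < l.length := by
    have := hj; rw [List.length_drop] at this
    omega
  have hi' : m + i < l.length := by omega
  rw [List.getElem_drop, List.getElem_drop] at heq
  obtain ⟨k, hk, hik, hkj, hlt⟩ := h (m + i) (m + j) hi' hj' (by omega) heq
  have hk' : k - m < (l.drop m).length := by
    rw [List.length_drop]; omega
  refine ⟨k - m, hk', by omega, by omega, ?_⟩
  rw [List.getElem_drop, List.getElem_drop]
  have : m + (k - m) = k := by omega
  simpa [this] using hlt

lemma sepL_aux : ∀ n c : ℕ, ∀ l : List ℕ, (∀ x ∈ l, c ≤ x ∧ x < c + n) → SepL l →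
    l.length ≤ 2 ^ n - 1 := by
  intro n
  induction n with
  | zero =>
    intro c l hb _
    match l with
    | [] => simp
    | x :: t =>
      have := hb x List.mem_cons_self
      omega
  | succ n ih =>
    intro c l hb hs
    by_cases hc : c ∈ l
    · obtain ⟨p, hp, hpl⟩ := List.mem_iff_getElem.mp hc
      -- c occurs only at p (any other occurrence gives a smaller element, impossible)
      have huniq : ∀ i : ℕ, ∀ _hi : i < l.length, l[i] = c → i = p := by
        intro i hi hil
        by_contra hne
        rcases lt_or_gt_of_ne hne with hlt | hgt
        · obtain ⟨k, hk, _, _, hklt⟩ := hs i p hi hp hlt (hil.trans hpl.symm)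
          have := (hb l[k] (List.getElem_mem hk)).1
          omega
        · obtain ⟨k, hk, _, _, hklt⟩ := hs p i hp hi hgt (hpl.trans hil.symm)
          have := (hb l[k] (List.getElem_mem hk)).1
          omega
      have b1 : ∀ x ∈ l.take p, c + 1 ≤ x ∧ x < c + 1 + n := by
        intro x hx
        obtain ⟨i, hi, hix⟩ := List.mem_iff_getElem.mp hx
        have hi' : i < p := by
          rw [List.length_take] at hi; omega
        rw [List.getElem_take] at hix
        have hbx := hb x (by rw [← hix]; exact List.getElem_mem (by omega))
        have hne : x ≠ c := by
          intro hxc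
          have := huniq i (by omega) (hix.trans hxc)
          omega
        omega
      have b2 : ∀ x ∈ l.drop (p + 1), c + 1 ≤ x ∧ x < c + 1 + n := by
        intro x hx
        obtain ⟨i, hi, hix⟩ := List.mem_iff_getElem.mp hx
        rw [List.length_drop] at hi
        rw [List.getElem_drop] at hix
        have hbx := hb x (by rw [← hix]; exact List.getElem_mem (by omega))
        have hne : x ≠ c := by
          intro hxc
          have := huniq (p + 1 + i) (by omega) (hix.trans hxc)
          omega
        omega
      have h1 := ih (c + 1) (l.take p) b1 (sepL_take l p hs)
      have h2 := ih (c + 1) (l.drop (p + 1)) b2 (sepL_drop l (p + 1) hs)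
      rw [List.length_take] at h1
      rw [List.length_drop] at h2
      have hpow : 2 ^ (n + 1) = 2 * 2 ^ n := by ring
      have hpos : 1 ≤ 2 ^ n := Nat.one_le_two_pow
      omega
    · have hb' : ∀ x ∈ l, c + 1 ≤ x ∧ x < c + 1 + n := by
        intro x hx
        have := hb x hx
        have : x ≠ c := fun hxc => hc (hxc ▸ hx)
        have := hb x hx
        omega
      have := ih (c + 1) l hb' hs
      have hpos : 1 ≤ 2 ^ n := Nat.one_le_two_pow
      have hpow : 2 ^ (n + 1) = 2 * 2 ^ n := by ring
      omega

/-- If in a list with values in `Fin n`, any two equal entries are separated by a strictly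
smaller entry, then the list has length at most `2 ^ n - 1`. -/
theorem length_le_of_separated (n : ℕ) (hn : 1 ≤ n) (l : List (Fin n))
    (h : ∀ i j : Fin l.length, (i : ℕ) < (j : ℕ) → l.get i = l.get j →
      ∃ k : Fin l.length, (i : ℕ) < (k : ℕ) ∧ (k : ℕ) < (j : ℕ) ∧ l.get k < l.get i) :
    l.length ≤ 2 ^ n - 1 := by
  have hsep : SepL (l.map Fin.val) := by
    intro i j hi hj hij heq
    rw [List.length_map] at hi hj
    rw [List.getElem_map, List.getElem_map] at heq
    obtain ⟨k, hik, hkj, hlt⟩ := h ⟨i, hi⟩ ⟨j, hj⟩ hij (Fin.ext heq)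
    exact ⟨k, by simpa using k.2, hik, hkj, by
      rw [List.getElem_map, List.getElem_map]
      exact hlt⟩
  have hb : ∀ x ∈ l.map Fin.val, 0 ≤ x ∧ x < 0 + n := by
    intro x hx
    obtain ⟨y, _, rfl⟩ := List.mem_map.mp hx
    simpa using y.2
  have := sepL_aux n 0 (l.map Fin.val) hb hsep
  simpa using this
end
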